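/- arXiv:2006.08892 — 7 statements merged into one kernel-verified Lean document; each statement's English description precedes it below -/
import Mathlib

section
/- Let Δ, d₁, d₂ be natural numbers with Δ ≥ d₁ + 1, d₁ ≥ d₂ ≥ 1. Then e^(Δ(d₁+2)) + (d₁+2)·e^(d₁+2) + e^(Δd₂) + (d₂-1)·e^(d₂) > e^(Δ(d₁+1)) + d₁·e^(d₁+1) + e^(Δ(d₂+1)) + d₂·e^(d₂+1). -/
theorem stmt_2 (Δ d₁ d₂ : ℕ) (hΔ : d₁ + 1 ≤ Δ) (h12 : d₂ ≤ d₁) (h2 : 1 ≤ d₂) :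
    Real.exp ((Δ : ℝ) * (d₁ + 2)) + ((d₁ : ℝ) + 2) * Real.exp ((d₁ : ℝ) + 2)
      + Real.exp ((Δ : ℝ) * d₂) + ((d₂ : ℝ) - 1) * Real.exp (d₂ : ℝ)
    > Real.exp ((Δ : ℝ) * (d₁ + 1)) + (d₁ : ℝ) * Real.exp ((d₁ : ℝ) + 1)
      + Real.exp ((Δ : ℝ) * (d₂ + 1)) + (d₂ : ℝ) * Real.exp ((d₂ : ℝ) + 1) := by
  have hx : (d₁ : ℝ) + 1 ≤ (Δ : ℝ) := by exact_mod_cast hΔ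
  have hb : (1 : ℝ) ≤ (d₂ : ℝ) := by exact_mod_cast h2
  have hab : (d₂ : ℝ) ≤ (d₁ : ℝ) := by exact_mod_cast h12
  have hx0 : (0 : ℝ) ≤ (Δ : ℝ) := by positivity
  have h1 : Real.exp ((Δ : ℝ) * (d₁ + 2)) = Real.exp ((Δ : ℝ) * (d₁ + 1)) * Real.exp Δ := by
    rw [← Real.exp_add]; ring_nf
  have h2' : Real.exp ((Δ : ℝ) * (d₂ + 1)) = Real.exp ((Δ : ℝ) * d₂) * Real.exp Δ := by
    rw [← Real.exp_add]; ring_nf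
  have h3 : Real.exp ((d₁ : ℝ) + 2) = Real.exp ((d₁ : ℝ) + 1) * Real.exp 1 := by
    rw [← Real.exp_add]; ring_nf
  have h4 : Real.exp ((d₂ : ℝ) + 1) = Real.exp (d₂ : ℝ) * Real.exp 1 := by
    rw [← Real.exp_add]
  have hone : (1 : ℝ) ≤ Real.exp Δ := Real.one_le_exp hx0
  have hmono : Real.exp ((Δ : ℝ) * d₂) ≤ Real.exp ((Δ : ℝ) * (d₁ + 1)) := by
    apply Real.exp_le_exp.2
    nlinarith
  have hmono2 : Real.exp ((d₂ : ℝ) + 1) ≤ Real.exp ((d₁ : ℝ) + 1) := by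
    apply Real.exp_le_exp.2; linarith
  have he : (2 : ℝ) ≤ Real.exp 1 := by
    have := Real.add_one_le_exp (1 : ℝ); linarith
  have p1 : (0 : ℝ) < Real.exp ((d₂ : ℝ)) := Real.exp_pos _
  have p2 : (0 : ℝ) < Real.exp ((d₁ : ℝ) + 1) := Real.exp_pos _
  have p3 : (0 : ℝ) < Real.exp ((Δ : ℝ) * d₂) := Real.exp_pos _
  have hA : (0:ℝ) ≤ (Real.exp (Δ:ℝ) - 1) * (Real.exp ((Δ:ℝ)*(d₁+1)) - Real.exp ((Δ:ℝ)*d₂)) :=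
    mul_nonneg (by linarith) (by linarith)
  have hcoef : (0:ℝ) ≤ ((d₁:ℝ)+2) * Real.exp 1 - d₁ := by nlinarith
  have hB : (0:ℝ) ≤ (Real.exp ((d₁:ℝ)+1) - Real.exp 1 * Real.exp (d₂:ℝ)) * (((d₁:ℝ)+2) * Real.exp 1 - d₁) := by
    apply mul_nonneg _ hcoef
    rw [h4] at hmono2; linarith
  have hC : (0:ℝ) ≤ Real.exp (d₂:ℝ) * ((Real.exp 1 - 2) * (Real.exp 1 * ((d₁:ℝ)+2))) := by
    apply mul_nonneg (le_of_lt p1); apply mul_nonneg (by linarith); positivity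
  have hD : (0:ℝ) < Real.exp (d₂:ℝ) * Real.exp 1 * ((d₁:ℝ) - d₂ + 4) := by
    apply mul_pos (by positivity); linarith
  have hE : (0:ℝ) ≤ ((d₂:ℝ) - 1) * Real.exp (d₂:ℝ) := mul_nonneg (by linarith) (le_of_lt p1)
  nlinarith [hA, hB, hC, hD, hE]
end

section
/- Let x, y be natural numbers with 1 ≤ x, x + 1 < y. Then e^((x+2)y) + (x+1)·e^(x+2) + (y-1)·e^y > e^((x+1)(y+1)) + x·e^(x+1) + y·e^(y+1). -/
theorem stmt_3 (x y : ℕ) (hx : 1 ≤ x) (hy : x + 1 < y) :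
    Real.exp (((x : ℝ) + 2) * y) + ((x : ℝ) + 1) * Real.exp ((x : ℝ) + 2)
      + ((y : ℝ) - 1) * Real.exp (y : ℝ)
    > Real.exp (((x : ℝ) + 1) * ((y : ℝ) + 1)) + (x : ℝ) * Real.exp ((x : ℝ) + 1)
      + (y : ℝ) * Real.exp ((y : ℝ) + 1) := by
  have ha : (1 : ℝ) ≤ (x : ℝ) := by exact_mod_cast hx
  have hb : (x : ℝ) + 2 ≤ (y : ℝ) := by
    have : x + 2 ≤ y := hy
    exact_mod_cast this
  -- A: exp((x+2)y) ≥ e * exp((x+1)(y+1))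
  have hA : Real.exp 1 * Real.exp (((x : ℝ) + 1) * ((y : ℝ) + 1))
      ≤ Real.exp (((x : ℝ) + 2) * y) := by
    rw [← Real.exp_add]
    apply Real.exp_le_exp.2
    nlinarith
  -- B
  have hB : (x : ℝ) * Real.exp ((x : ℝ) + 1) ≤ ((x : ℝ) + 1) * Real.exp ((x : ℝ) + 2) := by
    have h1 : Real.exp ((x : ℝ) + 1) ≤ Real.exp ((x : ℝ) + 2) := by
      apply Real.exp_le_exp.2; linarith
    have h2 : 0 < Real.exp ((x : ℝ) + 1) := Real.exp_pos _
    nlinarith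
  -- C
  have hC : (y : ℝ) * Real.exp ((y : ℝ) + 1)
      < (Real.exp 1 - 1) * Real.exp (((x : ℝ) + 1) * ((y : ℝ) + 1))
        + ((y : ℝ) - 1) * Real.exp (y : ℝ) := by
    have he : (2 : ℝ) < Real.exp 1 := by
      have := Real.exp_one_gt_d9; linarith
    have hu : (y : ℝ) + 2 ≤ Real.exp ((y : ℝ) + 1) := by
      have := Real.add_one_le_exp ((y : ℝ) + 1); linarith
    have hsq : Real.exp ((y : ℝ) + 1) * Real.exp ((y : ℝ) + 1)
        ≤ Real.exp (((x : ℝ) + 1) * ((y : ℝ) + 1)) := by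
      rw [← Real.exp_add]
      apply Real.exp_le_exp.2
      nlinarith
    have hey : 0 < Real.exp (y : ℝ) := Real.exp_pos _
    have hupos : 0 < Real.exp ((y : ℝ) + 1) := Real.exp_pos _
    nlinarith [mul_pos hupos hupos, sq_nonneg (Real.exp ((y : ℝ) + 1) - (y:ℝ))]
  nlinarith [Real.exp_pos (((x : ℝ) + 1) * ((y : ℝ) + 1))]
end

section
/- For natural numbers x ≥ 1 and y ≥ x + 2, we have e^(xy+2y) - e^(xy+x+y+1) - y·e^(y+1) > 0. -/
theorem stmt_4 (x y : ℕ) (hx : 1 ≤ x) (hy : x + 2 ≤ y) :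
    Real.exp ((x : ℝ) * y + 2 * y) - Real.exp ((x : ℝ) * y + x + y + 1)
      - (y : ℝ) * Real.exp ((y : ℝ) + 1) > 0 := by
  have hx' : (1 : ℝ) ≤ x := by exact_mod_cast hx
  have hy' : (x : ℝ) + 2 ≤ y := by exact_mod_cast hy
  set A : ℝ := (x : ℝ) * y + x + y + 1 with hA
  have h1 : Real.exp (A + 1) ≤ Real.exp ((x : ℝ) * y + 2 * y) := by
    apply Real.exp_le_exp.mpr; nlinarith
  have h2 : Real.exp (A + 1) = Real.exp 1 * Real.exp A := by
    rw [← Real.exp_add]; ring_nf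
  have h3 : Real.exp (2 * ((y : ℝ) + 1)) ≤ Real.exp A := by
    apply Real.exp_le_exp.mpr; nlinarith
  have h4 : Real.exp (2 * ((y : ℝ) + 1)) = Real.exp ((y : ℝ) + 1) * Real.exp ((y : ℝ) + 1) := by
    rw [← Real.exp_add]; ring_nf
  have h5 : (y : ℝ) + 1 < Real.exp ((y : ℝ) + 1) := by
    have := Real.add_one_lt_exp (x := (y : ℝ) + 1) (by positivity)
    linarith
  have h6 : (2 : ℝ) < Real.exp 1 := by
    have := Real.exp_one_gt_d9; linarith
  have hpos : 0 < Real.exp ((y : ℝ) + 1) := Real.exp_pos _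
  have hApos : 0 < Real.exp A := Real.exp_pos _
  nlinarith [mul_pos hpos hpos]
end

section
/- If n ≥ 5 is an odd natural number, then e^((n²-1)/4) + ((n-3)/2)·e^((n-1)/2) + ((n-1)/2)·e^((n+1)/2) > (n-1)·e^(n-1). -/
theorem stmt_7 (n : ℕ) (hn : 5 ≤ n) (ho : Odd n) :
    Real.exp (((n : ℝ) ^ 2 - 1) / 4) + (((n : ℝ) - 3) / 2) * Real.exp (((n : ℝ) - 1) / 2)
      + (((n : ℝ) - 1) / 2) * Real.exp (((n : ℝ) + 1) / 2)
    > ((n : ℝ) - 1) * Real.exp ((n : ℝ) - 1) := by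
  have hx : (5 : ℝ) ≤ (n : ℝ) := by exact_mod_cast hn
  set x : ℝ := (n : ℝ) with hxdef
  have key : Real.exp ((x ^ 2 - 1) / 4) > (x - 1) * Real.exp (x - 1) := by
    have hsplit : (x ^ 2 - 1) / 4 = (x - 1) * (x - 3) / 4 + (x - 1) := by ring
    rw [hsplit, Real.exp_add]
    have hexp : Real.exp ((x - 1) * (x - 3) / 4) > x - 1 := by
      rcases lt_or_ge x 7 with h7 | h7
      · -- then n = 5
        have hn5 : n = 5 := by
          obtain ⟨k, hk⟩ := ho
          have h7' : (n : ℝ) < 7 := h7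
          have : n < 7 := by exact_mod_cast h7'
          omega
        subst hn5
        have hx5 : x = 5 := by norm_num [hxdef]
        rw [hx5]
        have h2 : ((5:ℝ) - 1) * (5 - 3) / 4 = 2 := by norm_num
        rw [h2]
        have : Real.exp 2 = Real.exp 1 * Real.exp 1 := by
          rw [← Real.exp_add]; norm_num
        rw [this]
        nlinarith [Real.exp_one_gt_d9]
      · have hd : x - 1 ≤ (x - 1) * (x - 3) / 4 := by nlinarith
        have := Real.add_one_le_exp ((x - 1) * (x - 3) / 4)
        linarith
    have hpos : 0 < Real.exp (x - 1) := Real.exp_pos _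
    nlinarith
  have h1 : 0 ≤ ((x - 3) / 2) * Real.exp ((x - 1) / 2) := by
    have := Real.exp_pos ((x - 1) / 2); nlinarith
  have h2 : 0 ≤ ((x - 1) / 2) * Real.exp ((x + 1) / 2) := by
    have := Real.exp_pos ((x + 1) / 2); nlinarith
  linarith
end

section
/- Let T be a tree on n ≥ 4 vertices in which the distance between every pendant (degree-1) vertex and every vertex of maximum degree is at most 2. Then either T is a double star, or T has a unique vertex of maximum degree and every vertex of T is at distance at most 2 from that vertex. -/
open SimpleGraph Walk Finset

section Aux
variable {V : Type*} [DecidableEq V] {T : SimpleGraph V}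

/-- In a tree, every path between two vertices has length equal to the distance. -/
lemma tree_path_length_eq_dist (hT : T.IsTree) {a b : V} (p : T.Walk a b)
    (hp : p.IsPath) : p.length = T.dist a b := by
  obtain ⟨q, hq⟩ := hT.isConnected.exists_walk_length_eq_dist a b
  have hb : q.bypass.IsPath := q.bypass_isPath
  have h1 : q.bypass.length = T.dist a b :=
    le_antisymm (hq ▸ q.length_bypass_le) (T.dist_le _)
  have := (hT.existsUnique_path a b).unique hp hb
  rw [this, h1]

lemma tree_exists_path_dist (hT : T.IsTree) (a b : V) :
    ∃ p : T.Walk a b, p.IsPath ∧ p.length = T.dist a b := by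
  obtain ⟨q, hq⟩ := hT.isConnected.exists_walk_length_eq_dist a b
  exact ⟨q.bypass, q.bypass_isPath,
    le_antisymm (hq ▸ q.length_bypass_le) (T.dist_le _)⟩

lemma adj_dist_eq_one {a b : V} (h : T.Adj a b) : T.dist a b = 1 :=
  SimpleGraph.dist_eq_one_iff_adj.2 h

lemma concat_isPath {a b c : V} {p : T.Walk a b} (hp : p.IsPath) (h : T.Adj b c)
    (hc : c ∉ p.support) : (p.concat h).IsPath := by
  rw [← isPath_reverse_iff, reverse_concat]
  exact hp.reverse.cons (by simpa using hc)

/-- In a finite tree with at least 2 vertices, for each vertex `u` there is a leaf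
at maximal distance from `u`. -/
lemma exists_far_leaf [Fintype V] [DecidableRel T.Adj] (hT : T.IsTree)
    (hcard : 2 ≤ Fintype.card V) (u : V) :
    ∃ m : V, T.degree m = 1 ∧ ∀ v, T.dist u v ≤ T.dist u m := by
  obtain ⟨m, -, hm⟩ := Finset.exists_max_image Finset.univ (T.dist u) ⟨u, Finset.mem_univ u⟩
  have hmax : ∀ v, T.dist u v ≤ T.dist u m := fun v => hm v (Finset.mem_univ v)
  obtain ⟨v, hv⟩ := Fintype.exists_ne_of_one_lt_card (by omega) u
  have hd1 : 1 ≤ T.dist u m :=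
    le_trans (hT.isConnected.pos_dist_of_ne (Ne.symm hv)) (hmax v)
  set d := T.dist u m with hd
  -- every neighbor y of m has dist u y + 1 = d
  have hnbr : ∀ y, T.Adj m y → T.dist u y + 1 = d := by
    intro y hy
    have hle : T.dist u y ≤ d := hmax y
    have hge : d ≤ T.dist u y + 1 := by
      calc d ≤ T.dist u y + T.dist y m := hT.isConnected.dist_triangle
        _ = T.dist u y + 1 := by rw [adj_dist_eq_one hy.symm]
    rcases lt_or_eq_of_le hle with hlt | heq
    · omega
    · exfalso
      obtain ⟨q, hqp, hql⟩ := tree_exists_path_dist hT u y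
      by_cases hmem : m ∈ q.support
      · have h1 : (q.takeUntil m hmem).length = d :=
          tree_path_length_eq_dist hT _ (hqp.takeUntil hmem)
        have h2 : (q.dropUntil m hmem).length = T.dist m y :=
          tree_path_length_eq_dist hT _ (hqp.dropUntil hmem)
        have h3 : ((q.takeUntil m hmem).append (q.dropUntil m hmem)).length = q.length := by
          rw [q.take_spec hmem]
        rw [Walk.length_append, h1, h2, adj_dist_eq_one hy, hql, ← heq] at h3
        omega
      · have hpath : (q.concat hy.symm).IsPath := concat_isPath hqp hy.symm hmem
        have := tree_path_length_eq_dist hT _ hpath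
        rw [Walk.length_concat, hql, ← hd] at this
        omega
  -- any two neighbors of m are equal
  have huniq : ∀ y₁ y₂, T.Adj m y₁ → T.Adj m y₂ → y₁ = y₂ := by
    intro y₁ y₂ h₁ h₂
    by_contra hne
    have key : ∀ y, T.Adj m y → ∃ p : T.Walk u y, p.IsPath ∧ p.length + 1 = d ∧
        m ∉ p.support := by
      intro y hy
      obtain ⟨p, hpp, hpl⟩ := tree_exists_path_dist hT u y
      refine ⟨p, hpp, by rw [hpl]; exact hnbr y hy, fun hmem => ?_⟩
      have h1 : (p.takeUntil m hmem).length = d :=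
        tree_path_length_eq_dist hT _ (hpp.takeUntil hmem)
      have h2 := Walk.length_takeUntil_le p hmem
      rw [h1, hpl] at h2
      have := hnbr y hy
      omega
    obtain ⟨p₁, hp₁, hl₁, hm₁⟩ := key y₁ h₁
    obtain ⟨p₂, hp₂, hl₂, hm₂⟩ := key y₂ h₂
    have hq₁ : (p₁.concat h₁.symm).IsPath := concat_isPath hp₁ h₁.symm hm₁
    have hq₂ : (p₂.concat h₂.symm).IsPath := concat_isPath hp₂ h₂.symm hm₂
    have heq := (hT.existsUnique_path u m).unique hq₁ hq₂
    have hsupp : p₁.support.concat m = p₂.support.concat m := by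
      rw [List.concat_eq_append, List.concat_eq_append, ← Walk.support_concat p₁ h₁.symm, ← Walk.support_concat p₂ h₂.symm, heq]
    simp only [List.concat_eq_append] at hsupp
    have hsupp' : p₁.support = p₂.support := by
      have := congrArg List.dropLast hsupp
      simpa [List.dropLast_concat] using this
    apply hne
    have e₁ : p₁.support.getLast (by simp) = y₁ := Walk.getLast_support p₁
    have e₂ : p₂.support.getLast (by simp) = y₂ := Walk.getLast_support p₂
    rw [← e₁, ← e₂]
    congr 1
  -- m has a neighbor
  obtain ⟨p, hpp, hpl⟩ := tree_exists_path_dist hT u m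
  have hnn : ¬ p.reverse.Nil := by
    rw [Walk.nil_iff_length_eq, Walk.length_reverse, hpl]
    omega
  have hy0 : T.Adj m (p.reverse.getVert 1) := Walk.adj_snd hnn
  refine ⟨m, ?_, hmax⟩
  have : T.neighborFinset m = {p.reverse.getVert 1} := by
    ext z
    simp only [mem_neighborFinset, Finset.mem_singleton]
    exact ⟨fun hz => huniq z _ hz hy0, fun hz => hz ▸ hy0⟩
  rw [SimpleGraph.degree, this, Finset.card_singleton]

end Aux

/-- A double star: a graph with exactly two non-pendant vertices, which are adjacent. -/
def IsDoubleStar {V : Type*} [Fintype V] (T : SimpleGraph V) [DecidableRel T.Adj] : Prop :=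
  ∃ u v : V, u ≠ v ∧ T.Adj u v ∧ ∀ w : V, T.degree w ≠ 1 ↔ (w = u ∨ w = v)

theorem stmt_11 {V : Type*} [Fintype V] (T : SimpleGraph V) [DecidableRel T.Adj]
    (hT : T.IsTree) (hn : 4 ≤ Fintype.card V)
    (h : ∀ v u : V, T.degree v = 1 → T.degree u = T.maxDegree → T.dist v u ≤ 2) :
    IsDoubleStar T ∨
      ((∃! u : V, T.degree u = T.maxDegree) ∧
        ∀ u : V, T.degree u = T.maxDegree → ∀ v : V, T.dist u v ≤ 2) := by
  classical
  have hNE : Nonempty V := by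
    rw [← Fintype.card_pos_iff]; omega
  -- max degree is at least 2
  have hΔ : 2 ≤ T.maxDegree := by
    by_contra h'
    push_neg at h'
    have hle1 : T.maxDegree ≤ 1 := by omega
    have hsum : ∑ v, T.degree v = 2 * #T.edgeFinset :=
      T.sum_degrees_eq_twice_card_edges
    have hedge : #T.edgeFinset + 1 = Fintype.card V := hT.card_edgeFinset
    have hub : ∑ v, T.degree v ≤ Fintype.card V := by
      calc ∑ v, T.degree v ≤ ∑ _v : V, 1 :=
            Finset.sum_le_sum fun v _ => le_trans (T.degree_le_maxDegree v) hle1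
        _ = Fintype.card V := by simp
    omega
  -- every vertex is within distance 2 of any max-degree vertex
  have hC : ∀ u, T.degree u = T.maxDegree → ∀ v, T.dist u v ≤ 2 := by
    intro u hu v
    obtain ⟨m, hm1, hmmax⟩ := exists_far_leaf hT (by omega) u
    refine (hmmax v).trans ?_
    rw [SimpleGraph.dist_comm]
    exact h m u hm1 hu
  by_cases huniq : ∀ u w, T.degree u = T.maxDegree → T.degree w = T.maxDegree → u = w
  · right
    obtain ⟨v, hv⟩ := T.exists_maximal_degree_vertex
    exact ⟨⟨v, hv.symm, fun y hy => huniq y v hy hv.symm⟩, fun u hu v => hC u hu v⟩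
  · left
    push_neg at huniq
    obtain ⟨u, w, hu, hw, hne⟩ := huniq
    -- key: for adjacent max-degree vertices a b, any other neighbor of a is a leaf
    have key : ∀ a b : V, T.Adj a b → T.degree a = T.maxDegree → T.degree b = T.maxDegree →
        ∀ z, T.Adj a z → z ≠ b → T.degree z = 1 := by
      intro a b hab ha hb z haz hzb
      by_contra hz1
      have hzpos : 0 < T.degree z := by
        rw [← card_neighborFinset_eq_degree]
        exact Finset.card_pos.2 ⟨a, (T.mem_neighborFinset z a).2 haz.symm⟩
      have hz2 : 2 ≤ T.degree z := by omega
      obtain ⟨y, hy, hya⟩ := Finset.exists_mem_ne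
        (by rw [card_neighborFinset_eq_degree]; omega : 1 < (T.neighborFinset z).card) a
      rw [T.mem_neighborFinset] at hy
      -- y ≠ b
      have hyb : y ≠ b := by
        rintro rfl
        -- then a-z-b is a path of length 2, contradicting dist a b = 1
        have hpath : (Walk.cons haz (Walk.cons hy Walk.nil)).IsPath := by
          simp [Walk.cons_isPath_iff, haz.ne, hy.ne, hab.ne]
        have h2 := tree_path_length_eq_dist hT _ hpath
        rw [adj_dist_eq_one hab] at h2
        simp at h2
      -- path b-a-z-y has length 3
      have hbz : b ≠ z := Ne.symm hzb
      have hby : T.dist b y = 3 := by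
        have hpath : (Walk.cons hab.symm (Walk.cons haz (Walk.cons hy Walk.nil))).IsPath := by
          simp [Walk.cons_isPath_iff, hy.ne, haz.ne, Ne.symm hya, hab.ne', hbz, Ne.symm hyb]
        have := tree_path_length_eq_dist hT _ hpath
        simpa using this.symm
      have := hC b hb y
      omega
    -- u and w are adjacent
    have hadj : T.Adj u w := by
      have hd2 : T.dist u w ≤ 2 := hC u hu w
      have hd1 : 1 ≤ T.dist u w := hT.isConnected.pos_dist_of_ne hne
      rcases (by omega : T.dist u w = 1 ∨ T.dist u w = 2) with hd | hd
      · exact SimpleGraph.dist_eq_one_iff_adj.1 hd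
      · exfalso
        obtain ⟨p, hpp, hpl⟩ := tree_exists_path_dist hT u w
        rw [hd] at hpl
        have h0 : T.Adj u (p.getVert 1) := by
          have := p.adj_getVert_succ (by omega : 0 < p.length)
          simpa [p.getVert_zero] using this
        have h1 : T.Adj (p.getVert 1) w := by
          have := p.adj_getVert_succ (by omega : 1 < p.length)
          rwa [show (1 : ℕ) + 1 = p.length by omega, p.getVert_length] at this
        obtain ⟨y, hy, hyx⟩ := Finset.exists_mem_ne
          (by rw [card_neighborFinset_eq_degree, hu]; omega :
            1 < (T.neighborFinset u).card) (p.getVert 1)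
        rw [T.mem_neighborFinset] at hy
        have hyw : y ≠ w := by
          rintro rfl
          rw [adj_dist_eq_one hy] at hd
          omega
        have hpath : (Walk.cons h1.symm (Walk.cons h0.symm (Walk.cons hy Walk.nil))).IsPath := by
          simp [Walk.cons_isPath_iff, hy.ne, h0.ne, h0.ne', Ne.symm hyx, h1.ne', Ne.symm hne, Ne.symm hyw]
        have h3 := tree_path_length_eq_dist hT _ hpath
        have h4 := hC w hw y
        simp only [Walk.length_cons, Walk.length_nil] at h3
        omega
    refine ⟨u, w, hne, hadj, fun z => ?_⟩
    constructor
    · intro hz1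
      by_contra hcon
      push_neg at hcon
      obtain ⟨hzu, hzw⟩ := hcon
      have hd2 : T.dist u z ≤ 2 := hC u hu z
      have hd1 : 1 ≤ T.dist u z := hT.isConnected.pos_dist_of_ne (Ne.symm hzu)
      rcases (by omega : T.dist u z = 1 ∨ T.dist u z = 2) with hd | hd
      · exact hz1 (key u w hadj hu hw z (SimpleGraph.dist_eq_one_iff_adj.1 hd) hzw)
      · obtain ⟨p, hpp, hpl⟩ := tree_exists_path_dist hT u z
        rw [hd] at hpl
        have h0 : T.Adj u (p.getVert 1) := by
          have := p.adj_getVert_succ (by omega : 0 < p.length)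
          simpa [p.getVert_zero] using this
        have h1 : T.Adj (p.getVert 1) z := by
          have := p.adj_getVert_succ (by omega : 1 < p.length)
          rwa [show (1 : ℕ) + 1 = p.length by omega, p.getVert_length] at this
        by_cases hxw : p.getVert 1 = w
        · rw [hxw] at h1
          exact hz1 (key w u hadj.symm hw hu z h1 hzu)
        · have hx1 : T.degree (p.getVert 1) = 1 := key u w hadj hu hw _ h0 hxw
          have huz : u ≠ z := Ne.symm hzu
          have hsub : ({u, z} : Finset V) ⊆ T.neighborFinset (p.getVert 1) := by
            intro t ht
            rw [T.mem_neighborFinset]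
            rcases Finset.mem_insert.1 ht with rfl | ht
            · exact h0.symm
            · rw [Finset.mem_singleton] at ht
              subst ht
              exact h1
          have hcard := Finset.card_le_card hsub
          rw [Finset.card_insert_of_notMem (by simpa using huz), Finset.card_singleton,
            card_neighborFinset_eq_degree, hx1] at hcard
          omega
    · rintro (rfl | rfl)
      · rw [hu]; omega
      · rw [hw]; omega
end

section
/- Let T be a tree on n vertices containing a path u–v–w where u has maximum degree Δ in T and w is not a pendant vertex. Then the tree T' obtained from T by reattaching all neighbors of w other than v to v satisfies e^{M₂}(T') > e^{M₂}(T); in particular T does not maximize e^{M₂} among trees on n vertices. -/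
/-- The exponential second Zagreb index: `∑_{uv ∈ E(G)} e^(d(u)·d(v))`. -/
noncomputable def expM2 {V : Type*} [Fintype V] (G : SimpleGraph V) : ℝ :=
  letI := Classical.decRel G.Adj
  letI : DecidableEq V := Classical.decEq V
  ∑ e ∈ G.edgeFinset,
    Sym2.lift ⟨fun u v => Real.exp ((G.degree u : ℝ) * (G.degree v : ℝ)),
      fun u v => by simp only []; rw [mul_comm]⟩ e

/-- The double star on `n` vertices with centers `0, 1`, where `0` has the
pendant neighbors `2, …, x+1` and `1` has the remaining vertices as pendant
neighbors. -/
def doubleStarOn (n x : ℕ) : SimpleGraph (Fin n) :=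
  SimpleGraph.fromRel (fun a b =>
    (a.val = 0 ∧ b.val = 1) ∨ (a.val = 0 ∧ 2 ≤ b.val ∧ b.val < x + 2) ∨
      (a.val = 1 ∧ x + 2 ≤ b.val))

open Finset

section Aux

variable {V : Type*}

lemma aux_sum_darts_eq [Fintype V] (G : SimpleGraph V) [DecidableRel G.Adj]
    (f : V → V → ℝ) :
    ∑ a, ∑ b, (if G.Adj a b then f a b else 0) = ∑ d : G.Dart, f d.fst d.snd := by
  classical
  rw [← Finset.sum_product', ← Finset.sum_filter]
  refine (Finset.sum_bij (fun (d : G.Dart) _ => d.toProd) ?_ ?_ ?_ ?_).symm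
  · intro d _; simp [d.adj]
  · intro d₁ _ d₂ _ h; exact SimpleGraph.Dart.ext _ _ h
  · intro p hp
    exact ⟨SimpleGraph.Dart.mk p (by simpa using (Finset.mem_filter.1 hp).2), Finset.mem_univ _, rfl⟩
  · intro d _; rfl

lemma aux_sum_edges_eq [Fintype V] (G : SimpleGraph V) [DecidableRel G.Adj]
    (f : V → V → ℝ) (hf : ∀ a b, f a b = f b a) :
    2 * ∑ e ∈ G.edgeFinset, Sym2.lift ⟨f, hf⟩ e
      = ∑ a, ∑ b, if G.Adj a b then f a b else 0 := by
  classical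
  rw [aux_sum_darts_eq]
  have h2 : ∑ d : G.Dart, f d.fst d.snd
      = ∑ e ∈ G.edgeFinset, ∑ d ∈ univ.filter (fun d : G.Dart => d.edge = e), f d.fst d.snd :=
    (Finset.sum_fiberwise_of_maps_to (t := G.edgeFinset) (g := SimpleGraph.Dart.edge)
      (fun d _ => by rw [SimpleGraph.mem_edgeFinset]; exact d.edge_mem) _).symm
  rw [h2, Finset.mul_sum]
  refine Finset.sum_congr rfl fun e he => ?_
  rw [SimpleGraph.mem_edgeFinset] at he
  induction e with
  | _ x y =>
    have hadj : G.Adj x y := he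
    let d : G.Dart := ⟨(x, y), hadj⟩
    have hfib : (univ.filter (fun d' : G.Dart => d'.edge = d.edge)) = {d, d.symm} := by
      simpa using d.edge_fiber
    have hde : d.edge = s(x,y) := rfl
    rw [← hde, hfib, Finset.sum_pair (d.symm_ne.symm)]
    have hlift : Sym2.lift ⟨f, hf⟩ d.edge = f x y := Sym2.lift_mk _ _ _
    rw [hlift]
    show 2 * f x y = f x y + f y x
    rw [hf y x]; ring

lemma expM2_eq [Fintype V] (G : SimpleGraph V) [DecidableRel G.Adj] :
    expM2 G = ∑ e ∈ G.edgeFinset,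
      Sym2.lift ⟨fun u v => Real.exp ((G.degree u : ℝ) * (G.degree v : ℝ)),
        fun u v => by simp only []; rw [mul_comm]⟩ e := by
  unfold expM2
  congr!

/-- The summand function for the doubled index. -/
noncomputable def Fm [Fintype V] (G : SimpleGraph V) [DecidableRel G.Adj] (a b : V) : ℝ :=
  if G.Adj a b then Real.exp ((G.degree a : ℝ) * (G.degree b : ℝ)) else 0

lemma two_mul_expM2 [Fintype V] (G : SimpleGraph V) [DecidableRel G.Adj] :
    2 * expM2 G = ∑ a, ∑ b, Fm G a b := by
  rw [expM2_eq, aux_sum_edges_eq]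
  rfl

lemma Fm_nonneg [Fintype V] (G : SimpleGraph V) [DecidableRel G.Adj] (a b : V) :
    0 ≤ Fm G a b := by
  unfold Fm
  split
  · exact (Real.exp_pos _).le
  · exact le_refl 0

lemma aux_no_triangle (G : SimpleGraph V) (hG : G.IsAcyclic) {a b c : V}
    (hab : G.Adj a b) (hbc : G.Adj b c) (hca : G.Adj c a) : False := by
  rw [SimpleGraph.isAcyclic_iff_forall_adj_isBridge] at hG
  have hb := hG hab
  rw [SimpleGraph.isBridge_iff_adj_and_forall_walk_mem_edges] at hb
  have hw := hb (SimpleGraph.Walk.cons hca.symm (SimpleGraph.Walk.cons hbc.symm SimpleGraph.Walk.nil))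
  simp only [SimpleGraph.Walk.edges_cons, SimpleGraph.Walk.edges_nil, List.mem_cons,
    List.mem_singleton, List.not_mem_nil, or_false] at hw
  rcases hw with h | h
  · rw [Sym2.eq_iff] at h
    rcases h with ⟨-, h⟩ | ⟨h1, h2⟩
    · exact hbc.ne h
    · exact hca.ne h1.symm
  · rw [Sym2.eq_iff] at h
    rcases h with ⟨h1, -⟩ | ⟨h1, h2⟩
    · exact hca.ne h1.symm
    · exact hab.ne h1

lemma aux_reach {G H : SimpleGraph V} (h : ∀ a b, G.Adj a b → H.Reachable a b)
    {x y : V} (hxy : G.Reachable x y) : H.Reachable x y := by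
  obtain ⟨p⟩ := hxy
  induction p with
  | nil => exact SimpleGraph.Reachable.refl _
  | cons hadj p ih => exact (h _ _ hadj).trans ih

lemma aux_del [Fintype V] (G : SimpleGraph V) (hconn : G.Connected)
    (hnac : ¬ G.IsAcyclic) :
    ∃ G' : SimpleGraph V, G'.Connected ∧ G'.edgeSet.ncard + 1 = G.edgeSet.ncard := by
  classical
  rw [SimpleGraph.IsAcyclic] at hnac
  push_neg at hnac
  obtain ⟨x0, c, hc⟩ := hnac
  have h3 := hc.three_le_length
  have hne : c.edges ≠ [] := by
    intro h
    have := c.length_edges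
    rw [h] at this
    simp at this
    omega
  obtain ⟨e, he⟩ : ∃ e, e ∈ c.edges := ⟨_, List.head_mem hne⟩
  have he' : e ∈ G.edgeSet := c.edges_subset_edgeSet he
  have hnb : ¬ G.IsBridge e := by
    rw [SimpleGraph.isBridge_iff_mem_and_forall_cycle_notMem he']
    intro h
    exact h c hc he
  refine ⟨G.deleteEdges {e}, ?_, ?_⟩
  · rw [SimpleGraph.connected_iff]
    refine ⟨fun x y => ?_, hconn.nonempty⟩
    refine aux_reach (fun a b hab => ?_) (hconn.preconnected x y)
    by_cases hh : s(a, b) = e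
    · rw [← hh] at hnb
      rw [SimpleGraph.isBridge_iff] at hnb
      push_neg at hnb
      rw [← hh, SimpleGraph.deleteEdges]
      exact hnb
    · exact SimpleGraph.Adj.reachable (by simp [SimpleGraph.deleteEdges_adj, hab, hh])
  · have hE : (G.deleteEdges {e}).edgeSet = G.edgeSet \ {e} := by
      ext f
      rw [SimpleGraph.deleteEdges, SimpleGraph.edgeSet_sdiff, SimpleGraph.edgeSet_fromEdgeSet]
      simp only [Set.mem_diff, Set.mem_singleton_iff, Set.mem_setOf_eq, not_and, not_not]
      constructor
      · rintro ⟨hf, h2⟩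
        refine ⟨hf, fun hfe => ?_⟩
        exact G.not_isDiag_of_mem_edgeSet hf (h2 hfe)
      · rintro ⟨hf, h2⟩
        exact ⟨hf, fun hfe => absurd hfe h2⟩
    rw [hE]
    exact Set.ncard_diff_singleton_add_one he' (Set.toFinite _)

lemma aux_conn_card [Fintype V] (n : ℕ) :
    ∀ G : SimpleGraph V, G.edgeSet.ncard = n → G.Connected → Fintype.card V ≤ n + 1 := by
  induction n using Nat.strong_induction_on with
  | _ n ih =>
    intro G hn hconn
    classical
    by_cases hac : G.IsAcyclic
    · have htree : G.IsTree := ⟨hconn, hac⟩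
      have hcf := htree.card_edgeFinset
      have hcard : G.edgeSet.ncard = G.edgeFinset.card := by
        rw [Set.ncard_eq_toFinset_card']
        congr 1
      omega
    · obtain ⟨G', hconn', hcard'⟩ := aux_del G hconn hac
      have hlt : G'.edgeSet.ncard < n := by omega
      have := ih _ hlt G' rfl hconn'
      omega

lemma aux_isTree [Fintype V] (G : SimpleGraph V) [Fintype G.edgeSet]
    (hconn : G.Connected) (hcard : G.edgeFinset.card + 1 = Fintype.card V) : G.IsTree := by
  refine ⟨hconn, ?_⟩
  by_contra hac
  obtain ⟨G', hconn', hcard'⟩ := aux_del G hconn hac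
  have h1 := aux_conn_card G'.edgeSet.ncard G' rfl hconn'
  have h2 : G.edgeSet.ncard = G.edgeFinset.card := by
    rw [Set.ncard_eq_toFinset_card']
    congr 1
  omega

end Aux

theorem stmt_12 {V : Type*} [Fintype V] (T : SimpleGraph V) [DecidableRel T.Adj]
    (hT : T.IsTree) (u v w : V) (huv : T.Adj u v) (hvw : T.Adj v w) (huw : u ≠ w)
    (hmax : T.degree u = T.maxDegree) (hw : T.degree w ≠ 1)
    (T' : SimpleGraph V)
    (hT' : ∀ a b : V, T'.Adj a b ↔
      ((T.Adj a b ∧ a ≠ w ∧ b ≠ w) ∨ (a = v ∧ T.Adj w b ∧ b ≠ v) ∨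
        (b = v ∧ T.Adj w a ∧ a ≠ v) ∨ (a = v ∧ b = w) ∨ (a = w ∧ b = v))) :
    expM2 T < expM2 T' ∧ ¬ ∀ S : SimpleGraph V, S.IsTree → expM2 S ≤ expM2 T := by
  letI : DecidableEq V := Classical.decEq V
  letI : DecidableRel T'.Adj := Classical.decRel _
  have hvw' : v ≠ w := hvw.ne
  have hwv' : w ≠ v := hvw'.symm
  have huv' : u ≠ v := huv.ne
  have hwv : T.Adj w v := hvw.symm
  have hcom : ∀ x : V, T.Adj v x → T.Adj w x → False := fun x h1 h2 =>
    aux_no_triangle T hT.IsAcyclic hvw h2 h1.symm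
  have ht2 : 2 ≤ T.degree w := by
    have h1 : 0 < T.degree w := by
      rw [SimpleGraph.degree_pos_iff_exists_adj]; exact ⟨v, hwv⟩
    omega
  have hdv2 : 2 ≤ T.degree v := by
    have hsub : ({u, w} : Finset V) ⊆ T.neighborFinset v := by
      intro x hx
      rcases Finset.mem_insert.1 hx with rfl | hx
      · rw [SimpleGraph.mem_neighborFinset]; exact huv.symm
      · rw [Finset.mem_singleton] at hx
        subst hx
        rw [SimpleGraph.mem_neighborFinset]; exact hvw
    calc 2 = ({u, w} : Finset V).card := (Finset.card_pair huw).symm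
      _ ≤ (T.neighborFinset v).card := Finset.card_le_card hsub
      _ = T.degree v := T.card_neighborFinset_eq_degree v
  have hΔv : T.degree v ≤ T.degree u := hmax ▸ T.degree_le_maxDegree v
  have hΔw : T.degree w ≤ T.degree u := hmax ▸ T.degree_le_maxDegree w
  have hΔ2 : 2 ≤ T.degree u := le_trans hdv2 hΔv
  -- adjacency characterizations of T'
  have hA'wb : ∀ b : V, T'.Adj w b ↔ b = v := by
    intro b
    rw [hT']
    constructor
    · rintro (⟨-, h, -⟩ | ⟨h, -, -⟩ | ⟨-, h, -⟩ | ⟨h, -⟩ | ⟨-, h⟩)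
      · exact absurd rfl h
      · exact absurd h hwv'
      · exact absurd h (T.irrefl)
      · exact absurd h hwv'
      · exact h
    · rintro rfl; exact Or.inr (Or.inr (Or.inr (Or.inr ⟨rfl, rfl⟩)))
  have hA'vw : T'.Adj v w := (hT' v w).2 (Or.inr (Or.inr (Or.inr (Or.inl ⟨rfl, rfl⟩))))
  have hA'aw : ∀ a : V, a ≠ v → ¬ T'.Adj a w := by
    intro a hav h
    rw [hT'] at h
    rcases h with (⟨-, -, h⟩ | ⟨h, -, -⟩ | ⟨h, -, -⟩ | ⟨h, -⟩ | ⟨-, h⟩)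
    · exact h rfl
    · exact hav h
    · exact hvw' h.symm
    · exact hav h
    · exact hvw' h.symm
  have hA'ab : ∀ a b : V, a ≠ v → a ≠ w → b ≠ v → b ≠ w → (T'.Adj a b ↔ T.Adj a b) := by
    intro a b hav haw hbv hbw
    rw [hT']
    constructor
    · rintro (⟨h, -, -⟩ | ⟨h, -, -⟩ | ⟨h, -, -⟩ | ⟨h, -⟩ | ⟨h, -⟩)
      · exact h
      · exact absurd h hav
      · exact absurd h hbv
      · exact absurd h hav
      · exact absurd h haw
    · intro h; exact Or.inl ⟨h, haw, hbw⟩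
  have hA'av : ∀ a : V, a ≠ v → a ≠ w → (T'.Adj a v ↔ (T.Adj a v ∨ T.Adj w a)) := by
    intro a hav haw
    rw [hT']
    constructor
    · rintro (⟨h, -, -⟩ | ⟨h, -, -⟩ | ⟨-, h, -⟩ | ⟨h, -⟩ | ⟨h, -⟩)
      · exact Or.inl h
      · exact absurd h hav
      · exact Or.inr h
      · exact absurd h hav
      · exact absurd h haw
    · rintro (h | h)
      · exact Or.inl ⟨h, haw, hvw'⟩
      · exact Or.inr (Or.inr (Or.inl ⟨rfl, h, hav⟩))
  have hA'vb : ∀ b : V, b ≠ v → b ≠ w → (T'.Adj v b ↔ (T.Adj v b ∨ T.Adj w b)) := by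
    intro b hbv hbw
    rw [hT']
    constructor
    · rintro (⟨h, -, -⟩ | ⟨-, h, -⟩ | ⟨h, -, -⟩ | ⟨-, h⟩ | ⟨h, -⟩)
      · exact Or.inl h
      · exact Or.inr h
      · exact absurd h hbv
      · exact absurd h hbw
      · exact absurd h hvw'
    · rintro (h | h)
      · exact Or.inl ⟨h, hvw', hbw⟩
      · exact Or.inr (Or.inl ⟨rfl, h, hbv⟩)
  -- degree computations
  have hDw : T'.degree w = 1 := by
    have hNw : T'.neighborFinset w = {v} := by
      ext b; rw [SimpleGraph.mem_neighborFinset, hA'wb, Finset.mem_singleton]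
    rw [← T'.card_neighborFinset_eq_degree, hNw, Finset.card_singleton]
  have hDx : ∀ x : V, x ≠ v → x ≠ w → T'.degree x = T.degree x := by
    intro x hxv hxw
    by_cases hwx : T.Adj w x
    · have hnvx : ¬ T.Adj v x := fun h => hcom x h hwx
      have hN : T'.neighborFinset x = insert v ((T.neighborFinset x).erase w) := by
        ext b
        rw [SimpleGraph.mem_neighborFinset, Finset.mem_insert, Finset.mem_erase,
          SimpleGraph.mem_neighborFinset]
        by_cases hbv : b = v
        · subst hbv
          simp only [eq_self_iff_true, true_or, iff_true]
          exact (hA'av x hxv hxw).2 (Or.inr hwx)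
        · by_cases hbw : b = w
          · subst hbw
            constructor
            · intro h; exact absurd h (fun hh => hA'aw x hxv hh)
            · rintro (h | ⟨h, -⟩)
              · exact absurd h hwv'
              · exact absurd rfl h
          · rw [hA'ab x b hxv hxw hbv hbw]
            constructor
            · intro h; exact Or.inr ⟨hbw, h⟩
            · rintro (h | ⟨-, h⟩)
              · exact absurd h hbv
              · exact h
      rw [← T'.card_neighborFinset_eq_degree, hN, Finset.card_insert_of_notMem, 
        Finset.card_erase_of_mem]
      · have h1 : 1 ≤ T.degree x := by
          rw [← T.card_neighborFinset_eq_degree]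
          exact Finset.card_pos.2 ⟨w, (SimpleGraph.mem_neighborFinset _ _ _).2 hwx.symm⟩
        rw [T.card_neighborFinset_eq_degree]
        omega
      · rw [SimpleGraph.mem_neighborFinset]; exact hwx.symm
      · rw [Finset.mem_erase, SimpleGraph.mem_neighborFinset]
        rintro ⟨-, h⟩
        exact hnvx h.symm
    · have hN : T'.neighborFinset x = T.neighborFinset x := by
        ext b
        rw [SimpleGraph.mem_neighborFinset, SimpleGraph.mem_neighborFinset]
        by_cases hbv : b = v
        · subst hbv
          rw [hA'av x hxv hxw]
          constructor
          · rintro (h | h)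
            · exact h
            · exact absurd h hwx
          · exact Or.inl
        · by_cases hbw : b = w
          · subst hbw
            constructor
            · intro h; exact absurd h (hA'aw x hxv)
            · intro h; exact absurd h.symm hwx
          · exact hA'ab x b hxv hxw hbv hbw
      rw [← T'.card_neighborFinset_eq_degree, hN, T.card_neighborFinset_eq_degree]
  have hDv : T'.degree v + 1 = T.degree v + T.degree w := by
    have hN : T'.neighborFinset v
        = insert w (((T.neighborFinset v).erase w) ∪ ((T.neighborFinset w).erase v)) := by
      ext b
      rw [SimpleGraph.mem_neighborFinset, Finset.mem_insert, Finset.mem_union,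
        Finset.mem_erase, Finset.mem_erase, SimpleGraph.mem_neighborFinset,
        SimpleGraph.mem_neighborFinset]
      by_cases hbw : b = w
      · subst hbw
        simp only [eq_self_iff_true, true_or, iff_true]
        exact hA'vw
      · by_cases hbv : b = v
        · subst hbv
          constructor
          · intro h; exact absurd h T'.irrefl
          · rintro (h | ⟨-, h⟩ | ⟨h, -⟩)
            · exact absurd h hvw'
            · exact absurd h T.irrefl
            · exact absurd rfl h
        · rw [hA'vb b hbv hbw]
          constructor
          · rintro (h | h)
            · exact Or.inr (Or.inl ⟨hbw, h⟩)
            · exact Or.inr (Or.inr ⟨hbv, h⟩)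
          · rintro (h | ⟨-, h⟩ | ⟨-, h⟩)
            · exact absurd h hbw
            · exact Or.inl h
            · exact Or.inr h
    have hdisj : Disjoint ((T.neighborFinset v).erase w) ((T.neighborFinset w).erase v) := by
      rw [Finset.disjoint_left]
      intro b hb1 hb2
      rw [Finset.mem_erase, SimpleGraph.mem_neighborFinset] at hb1 hb2
      exact hcom b hb1.2 hb2.2
    rw [← T'.card_neighborFinset_eq_degree, hN, Finset.card_insert_of_notMem,
      Finset.card_union_of_disjoint hdisj, Finset.card_erase_of_mem, Finset.card_erase_of_mem]
    · rw [T.card_neighborFinset_eq_degree, T.card_neighborFinset_eq_degree]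
      omega
    · rw [SimpleGraph.mem_neighborFinset]; exact hwv
    · rw [SimpleGraph.mem_neighborFinset]; exact hvw
    · rw [Finset.mem_union, Finset.mem_erase, Finset.mem_erase,
        SimpleGraph.mem_neighborFinset, SimpleGraph.mem_neighborFinset]
      rintro (⟨h, -⟩ | ⟨-, h⟩)
      · exact h rfl
      · exact T.irrefl h
  -- the universe split
  have hUmem : ∀ a : V, a ∈ ((Finset.univ.erase v).erase w) ↔ (a ≠ v ∧ a ≠ w) := by
    intro a
    simp only [Finset.mem_erase, Finset.mem_univ, and_true]
    tauto
  set U : Finset V := (Finset.univ.erase v).erase w with hU_def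
  have huniv : (Finset.univ : Finset V) = insert v (insert w U) := by
    rw [hU_def, Finset.insert_erase (Finset.mem_erase.2 ⟨hwv', Finset.mem_univ w⟩),
      Finset.insert_erase (Finset.mem_univ v)]
  have hwnot : w ∉ U := by rw [hUmem]; rintro ⟨-, h⟩; exact h rfl
  have hvnot : v ∉ insert w U := by
    rw [Finset.mem_insert]
    rintro (h | h)
    · exact hvw' h
    · rw [hUmem] at h; exact h.1 rfl
  have hsplit : ∀ h : V → ℝ, ∑ b, h b = h v + h w + ∑ b ∈ U, h b := by
    intro h
    rw [huniv, Finset.sum_insert hvnot, Finset.sum_insert hwnot]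
    ring
  have hsplitN : ∀ h : V → ℕ, ∑ b, h b = h v + h w + ∑ b ∈ U, h b := by
    intro h
    rw [huniv, Finset.sum_insert hvnot, Finset.sum_insert hwnot]
    omega
  -- T' is a tree
  have hsum_deg : ∑ a, T'.degree a = ∑ a, T.degree a := by
    rw [hsplitN (fun a => T'.degree a), hsplitN (fun a => T.degree a)]
    have hUeq : ∑ a ∈ U, T'.degree a = ∑ a ∈ U, T.degree a :=
      Finset.sum_congr rfl fun a ha => by
        rw [hUmem] at ha; exact hDx a ha.1 ha.2
    rw [hUeq, hDw]
    omega
  have htree' : T'.IsTree := by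
    have hpre : ∀ a b : V, T.Adj a b → T'.Reachable a b := by
      intro a b hab
      by_cases haw : a = w
      · have hab' : T.Adj w b := by rw [← haw]; exact hab
        rw [haw]
        by_cases hbv : b = v
        · exact ((hA'wb b).2 hbv).reachable
        · have h1 : T'.Adj w v := (hA'wb v).2 rfl
          have h2 : T'.Adj v b := (hA'vb b hbv hab'.ne').2 (Or.inr hab')
          exact h1.reachable.trans h2.reachable
      · by_cases hbw : b = w
        · have hab' : T.Adj a w := by rw [← hbw]; exact hab
          rw [hbw]
          by_cases hav : a = v
          · rw [hav]; exact hA'vw.reachable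
          · have h2 : T'.Adj a v := (hA'av a hav haw).2 (Or.inr hab'.symm)
            exact h2.reachable.trans hA'vw.reachable
        · exact ((hT' a b).2 (Or.inl ⟨hab, haw, hbw⟩)).reachable
    have hconn' : T'.Connected := by
      rw [SimpleGraph.connected_iff]
      exact ⟨fun x y => aux_reach hpre (hT.isConnected.preconnected x y), hT.isConnected.nonempty⟩
    apply aux_isTree T' hconn'
    have h1 := T.sum_degrees_eq_twice_card_edges
    have h2 := T'.sum_degrees_eq_twice_card_edges
    have h3 := hT.card_edgeFinset
    omega
  -- the strict inequality
  have hdb0 : ∀ b : V, (0:ℝ) ≤ (T.degree b : ℝ) := fun b => Nat.cast_nonneg _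
  have hd'v_w : (T.degree w : ℝ) ≤ (T'.degree v : ℝ) := by
    have h : T.degree w ≤ T'.degree v := by omega
    exact_mod_cast h
  have hd'v_v : (T.degree v : ℝ) ≤ (T'.degree v : ℝ) := by
    have h : T.degree v ≤ T'.degree v := by omega
    exact_mod_cast h
  have hineq : ∑ a, ∑ b, Fm T a b < ∑ a, ∑ b, Fm T' a b := by
    have hrow : ∀ a ∈ U, ∑ b, Fm T a b ≤ ∑ b, Fm T' a b := by
      intro a ha
      rw [hUmem] at ha
      obtain ⟨hav, haw⟩ := ha
      rw [hsplit (fun b => Fm T a b), hsplit (fun b => Fm T' a b)]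
      have hUeq : ∑ b ∈ U, Fm T a b = ∑ b ∈ U, Fm T' a b := by
        refine Finset.sum_congr rfl fun b hb => ?_
        rw [hUmem] at hb
        unfold Fm
        rw [hDx a hav haw, hDx b hb.1 hb.2]
        exact if_congr (hA'ab a b hav haw hb.1 hb.2).symm rfl rfl
      have hfw' : Fm T' a w = 0 := by
        unfold Fm; rw [if_neg (hA'aw a hav)]
      have hvwterm : Fm T a v + Fm T a w ≤ Fm T' a v + Fm T' a w := by
        rw [hfw']
        by_cases haw2 : T.Adj a w
        · have hnav : ¬ T.Adj a v := fun h => hcom a h.symm haw2.symm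
          have hfv : Fm T a v = 0 := by unfold Fm; rw [if_neg hnav]
          have hfw : Fm T a w = Real.exp ((T.degree a : ℝ) * (T.degree w : ℝ)) := by
            unfold Fm; rw [if_pos haw2]
          have hfv' : Fm T' a v = Real.exp ((T.degree a : ℝ) * (T'.degree v : ℝ)) := by
            unfold Fm
            rw [if_pos ((hA'av a hav haw).2 (Or.inr haw2.symm)), hDx a hav haw]
          rw [hfv, hfw, hfv']
          have h5 : (T.degree a : ℝ) * (T.degree w : ℝ) ≤ (T.degree a : ℝ) * (T'.degree v : ℝ) :=
            mul_le_mul_of_nonneg_left hd'v_w (hdb0 a)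
          have h6 := Real.exp_le_exp.2 h5
          linarith
        · have hfw : Fm T a w = 0 := by unfold Fm; rw [if_neg haw2]
          by_cases hav2 : T.Adj a v
          · have hfv : Fm T a v = Real.exp ((T.degree a : ℝ) * (T.degree v : ℝ)) := by
              unfold Fm; rw [if_pos hav2]
            have hfv' : Fm T' a v = Real.exp ((T.degree a : ℝ) * (T'.degree v : ℝ)) := by
              unfold Fm; rw [if_pos ((hA'av a hav haw).2 (Or.inl hav2)), hDx a hav haw]
            rw [hfv, hfw, hfv']
            have h5 : (T.degree a : ℝ) * (T.degree v : ℝ) ≤ (T.degree a : ℝ) * (T'.degree v : ℝ) :=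
              mul_le_mul_of_nonneg_left hd'v_v (hdb0 a)
            have h6 := Real.exp_le_exp.2 h5
            linarith
          · have hfv : Fm T a v = 0 := by unfold Fm; rw [if_neg hav2]
            have hfv' : Fm T' a v = 0 := by
              unfold Fm
              rw [if_neg]
              rw [hA'av a hav haw]
              rintro (h | h)
              · exact hav2 h
              · exact haw2 h.symm
            rw [hfv, hfw, hfv']
      linarith [hUeq, hvwterm]
    have hgw' : ∑ b, Fm T' w b = Real.exp (T'.degree v : ℝ) := by
      rw [hsplit (fun b => Fm T' w b)]
      have h1 : Fm T' w v = Real.exp (T'.degree v : ℝ) := by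
        unfold Fm
        rw [if_pos ((hA'wb v).2 rfl), hDw]
        norm_num
      have h2 : Fm T' w w = 0 := by unfold Fm; rw [if_neg T'.irrefl]
      have h3 : ∑ b ∈ U, Fm T' w b = 0 := by
        refine Finset.sum_eq_zero fun b hb => ?_
        rw [hUmem] at hb
        unfold Fm
        rw [if_neg]
        rw [hA'wb]
        exact hb.1
      rw [h1, h2, h3]; ring
    have hgw : ∑ b, Fm T w b
        = Real.exp ((T.degree v : ℝ) * (T.degree w : ℝ)) + ∑ b ∈ U, Fm T w b := by
      rw [hsplit (fun b => Fm T w b)]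
      have h1 : Fm T w v = Real.exp ((T.degree w : ℝ) * (T.degree v : ℝ)) := by
        unfold Fm; rw [if_pos hwv]
      have h2 : Fm T w w = 0 := by unfold Fm; rw [if_neg T.irrefl]
      rw [h1, h2, mul_comm ((T.degree w : ℝ)) ((T.degree v : ℝ))]
      ring
    have hgv : ∑ b, Fm T v b
        = Real.exp ((T.degree v : ℝ) * (T.degree w : ℝ)) + ∑ b ∈ U, Fm T v b := by
      rw [hsplit (fun b => Fm T v b)]
      have h1 : Fm T v v = 0 := by unfold Fm; rw [if_neg T.irrefl]
      have h2 : Fm T v w = Real.exp ((T.degree v : ℝ) * (T.degree w : ℝ)) := by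
        unfold Fm; rw [if_pos hvw]
      rw [h1, h2]; ring
    have hgv' : ∑ b, Fm T' v b
        = Real.exp (T'.degree v : ℝ) + ∑ b ∈ U, Fm T' v b := by
      rw [hsplit (fun b => Fm T' v b)]
      have h1 : Fm T' v v = 0 := by unfold Fm; rw [if_neg T'.irrefl]
      have h2 : Fm T' v w = Real.exp (T'.degree v : ℝ) := by
        unfold Fm; rw [if_pos hA'vw, hDw]; norm_num
      rw [h1, h2]; ring
    have hsumv' : ∑ b ∈ U, Fm T' v b
        = (∑ b ∈ U, if T.Adj v b then Real.exp ((T'.degree v : ℝ) * (T.degree b : ℝ)) else 0)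
          + ∑ b ∈ U, if T.Adj w b then Real.exp ((T'.degree v : ℝ) * (T.degree b : ℝ)) else 0 := by
      rw [← Finset.sum_add_distrib]
      refine Finset.sum_congr rfl fun b hb => ?_
      rw [hUmem] at hb
      unfold Fm
      rw [hDx b hb.1 hb.2]
      by_cases h1 : T.Adj v b
      · have h2 : ¬ T.Adj w b := fun h => hcom b h1 h
        rw [if_pos ((hA'vb b hb.1 hb.2).2 (Or.inl h1)), if_pos h1, if_neg h2]
        ring
      · by_cases h2 : T.Adj w b
        · rw [if_pos ((hA'vb b hb.1 hb.2).2 (Or.inr h2)), if_neg h1, if_pos h2]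
          ring
        · rw [if_neg, if_neg h1, if_neg h2]
          · ring
          · rw [hA'vb b hb.1 hb.2]
            rintro (h | h)
            exacts [h1 h, h2 h]
    have hB : ∑ b ∈ U, Fm T w b
        ≤ ∑ b ∈ U, if T.Adj w b then Real.exp ((T'.degree v : ℝ) * (T.degree b : ℝ)) else 0 := by
      refine Finset.sum_le_sum fun b hb => ?_
      unfold Fm
      by_cases h : T.Adj w b
      · rw [if_pos h, if_pos h]
        exact Real.exp_le_exp.2 (mul_le_mul_of_nonneg_right hd'v_w (hdb0 b))
      · rw [if_neg h, if_neg h]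
    have hA : (∑ b ∈ U, Fm T v b) + (Real.exp ((T'.degree v : ℝ) * (T.degree u : ℝ))
          - Real.exp ((T.degree v : ℝ) * (T.degree u : ℝ)))
        ≤ ∑ b ∈ U, if T.Adj v b then Real.exp ((T'.degree v : ℝ) * (T.degree b : ℝ)) else 0 := by
      have hdiff : (∑ b ∈ U, if T.Adj v b then Real.exp ((T'.degree v : ℝ) * (T.degree b : ℝ)) else 0)
          - ∑ b ∈ U, Fm T v b
          = ∑ b ∈ U, (if T.Adj v b then Real.exp ((T'.degree v : ℝ) * (T.degree b : ℝ))
              - Real.exp ((T.degree v : ℝ) * (T.degree b : ℝ)) else 0) := by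
        rw [← Finset.sum_sub_distrib]
        refine Finset.sum_congr rfl fun b hb => ?_
        unfold Fm
        by_cases h : T.Adj v b
        · rw [if_pos h, if_pos h, if_pos h]
        · rw [if_neg h, if_neg h, if_neg h]; ring
      have hterm : ∀ b ∈ U, (0:ℝ) ≤ (if T.Adj v b then Real.exp ((T'.degree v : ℝ) * (T.degree b : ℝ))
          - Real.exp ((T.degree v : ℝ) * (T.degree b : ℝ)) else 0) := by
        intro b hb
        split
        · have h6 := Real.exp_le_exp.2 (mul_le_mul_of_nonneg_right hd'v_v (hdb0 b))
          linarith
        · exact le_refl 0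
      have hu : u ∈ U := by rw [hUmem]; exact ⟨huv', huw⟩
      have hsingle := Finset.single_le_sum hterm hu
      rw [if_pos huv.symm] at hsingle
      linarith [hdiff]
    have harith : Real.exp ((T.degree v : ℝ) * (T.degree u : ℝ))
        + 2 * Real.exp ((T.degree v : ℝ) * (T.degree w : ℝ))
        < Real.exp ((T'.degree v : ℝ) * (T.degree u : ℝ)) := by
      have hdu2 : (2:ℝ) ≤ (T.degree u : ℝ) := by exact_mod_cast hΔ2
      have hduw : (T.degree w : ℝ) ≤ (T.degree u : ℝ) := by exact_mod_cast hΔw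
      have hdv0 : (0:ℝ) ≤ (T.degree v : ℝ) := hdb0 v
      have hd'v : (T'.degree v : ℝ) = (T.degree v : ℝ) + (T.degree w : ℝ) - 1 := by
        have h2 : ((T'.degree v : ℝ)) + 1 = (T.degree v : ℝ) + (T.degree w : ℝ) := by
          exact_mod_cast hDv
        linarith
      have h1 : (T.degree v : ℝ) * (T.degree u : ℝ) + 2 ≤ (T'.degree v : ℝ) * (T.degree u : ℝ) := by
        rw [hd'v]
        have hdw2 : (2:ℝ) ≤ (T.degree w : ℝ) := by exact_mod_cast ht2
        nlinarith
      have h2 : Real.exp ((T.degree v : ℝ) * (T.degree u : ℝ) + 2)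
          ≤ Real.exp ((T'.degree v : ℝ) * (T.degree u : ℝ)) := Real.exp_le_exp.2 h1
      rw [Real.exp_add] at h2
      have h3 : (3:ℝ) < Real.exp 2 := by
        have h4 := Real.exp_one_gt_d9
        have h5 : Real.exp 2 = Real.exp 1 * Real.exp 1 := by
          rw [← Real.exp_add]; norm_num
        nlinarith
      have h6 : Real.exp ((T.degree v : ℝ) * (T.degree w : ℝ))
          ≤ Real.exp ((T.degree v : ℝ) * (T.degree u : ℝ)) :=
        Real.exp_le_exp.2 (mul_le_mul_of_nonneg_left hduw hdv0)
      nlinarith [Real.exp_pos ((T.degree v : ℝ) * (T.degree u : ℝ))]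
    rw [hsplit (fun a => ∑ b, Fm T a b), hsplit (fun a => ∑ b, Fm T' a b)]
    have hrows : ∑ a ∈ U, ∑ b, Fm T a b ≤ ∑ a ∈ U, ∑ b, Fm T' a b :=
      Finset.sum_le_sum hrow
    rw [hgv, hgw, hgv', hgw']
    have hexp'pos : (0:ℝ) < Real.exp (T'.degree v : ℝ) := Real.exp_pos _
    linarith [hsumv', hB, hA, harith, hrows]
  have hlt : expM2 T < expM2 T' := by
    have e1 := two_mul_expM2 T
    have e2 := two_mul_expM2 T'
    linarith
  exact ⟨hlt, fun hall => absurd (hall T' htree') (not_le.2 hlt)⟩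
end

section
/- Among all trees on n ≥ 4 vertices, the balanced double star S_{⌊(n-2)/2⌋,⌈(n-2)/2⌉} is the unique tree maximizing the exponential second Zagreb index e^{M₂}. -/
set_option linter.unusedSectionVars false

open Finset SimpleGraph Real

lemma expM2_eq_sum {V : Type*} [Fintype V] [DecidableEq V] (G : SimpleGraph V)
    [DecidableRel G.Adj] :
    expM2 G = ∑ e ∈ G.edgeFinset,
      Sym2.lift ⟨fun u v => Real.exp ((G.degree u : ℝ) * (G.degree v : ℝ)),
        fun u v => by simp only []; rw [mul_comm]⟩ e := by
  have hdeg : ∀ (w : V) (i1 i2 : Fintype (G.neighborSet w)),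
      @SimpleGraph.degree _ G w i1 = @SimpleGraph.degree _ G w i2 := by
    intro w i1 i2
    unfold SimpleGraph.degree SimpleGraph.neighborFinset
    congr 1
    ext z
    simp only [Set.mem_toFinset]
  unfold expM2
  apply Finset.sum_congr
  · ext e
    simp only [Set.mem_toFinset, SimpleGraph.edgeFinset, Set.mem_setOf_eq]
  · intro e _
    induction e with
    | _ a b =>
      rw [Sym2.lift_mk, Sym2.lift_mk]
      dsimp only
      rw [hdeg a, hdeg b]

namespace Helper13


/-- Value of `expM2` on a double star with `a` and `b` pendant vertices. -/
noncomputable def Fab (a b : ℕ) : ℝ :=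
  Real.exp ((a+1)*(b+1)) + a * Real.exp (a+1) + b * Real.exp (b+1)

lemma step_real0 (B : ℝ) (hB : 1 ≤ B) :
    exp (B+2) + (B+1) * exp (B+2) < exp (2*(B+1)) + exp 2 + B * exp (B+1) := by
  have he : (2.7182818283 : ℝ) < exp 1 := Real.exp_one_gt_d9
  have he' : exp 1 < 2.7182818286 := Real.exp_one_lt_d9
  have he2 : exp 2 = exp 1 * exp 1 := by rw [← exp_add]; norm_num
  have h2 : (B:ℝ) ≤ exp (B-1) := by
    have := Real.add_one_le_exp (B-1); linarith
  set X := exp (B+1) with hXdef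
  have hp1 : 0 < X := exp_pos _
  have h3 : exp (B+2) = exp 1 * X := by rw [hXdef, ← exp_add]; ring_nf
  have h4 : exp (2*(B+1)) = X * X := by rw [hXdef, ← exp_add]; ring_nf
  have hX : exp 1 * exp 1 * B ≤ X := by
    have h1 : X = exp 1 * exp 1 * exp (B-1) := by
      rw [hXdef, ← exp_add, ← exp_add]; ring_nf
    rw [h1]
    have : 0 ≤ exp 1 * exp 1 := by positivity
    nlinarith
  have hc : 0 < (exp 1 * exp 1 + 1) * B - (B+2) * exp 1 := by
    nlinarith [mul_nonneg (sub_nonneg.2 hB) (show (0:ℝ) ≤ exp 1 * exp 1 + 1 - exp 1 by nlinarith)]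
  rw [h3, h4, he2]
  nlinarith [mul_le_mul_of_nonneg_left hX hp1.le, mul_pos hp1 hc]


lemma step_real1 (A B : ℝ) (hA : 1 ≤ A) (hB : A + 1 ≤ B) :
    exp ((A+1)*(B+2)) + A * exp (A+1) + (B+1) * exp (B+2) <
      exp ((A+2)*(B+1)) + (A+1) * exp (A+2) + B * exp (B+1) := by
  have he : (2.7182818283 : ℝ) < exp 1 := Real.exp_one_gt_d9
  have hE1 : exp 1 * exp ((A+1)*(B+2)) ≤ exp ((A+2)*(B+1)) := by
    rw [← exp_add]
    apply exp_le_exp.2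
    nlinarith
  have hE2 : exp (B+2) * exp (B+2) ≤ exp ((A+1)*(B+2)) := by
    rw [← exp_add]
    apply exp_le_exp.2
    nlinarith
  have hE3 : B + 3 ≤ exp (B+2) := by
    have := Real.add_one_le_exp (B+2); linarith
  have hA1 : A * exp (A+1) ≤ (A+1) * exp (A+2) := by
    have := exp_le_exp.2 (show A+1 ≤ A+2 by linarith)
    nlinarith [exp_pos (A+1)]
  have hp : 0 < exp (B+2) := exp_pos _
  have hp2 : 0 < exp (B+1) := exp_pos _
  have hBpos : 0 ≤ B := by linarith
  nlinarith [mul_le_mul_of_nonneg_left hE3 (show (0:ℝ) ≤ 1.7182818283 * exp (B+2) by positivity),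
    mul_le_mul_of_nonneg_right hE2 (show (0:ℝ) ≤ 1.7182818283 by norm_num),
    mul_pos hp hp, mul_nonneg hBpos hp2.le]

lemma Fab_step (a b : ℕ) (h : a + 1 ≤ b) : Fab a (b+1) < Fab (a+1) b := by
  rcases Nat.eq_zero_or_pos a with rfl | ha
  · have := step_real0 (b : ℝ) (by exact_mod_cast h)
    unfold Fab
    push_cast
    ring_nf
    ring_nf at this
    convert this using 2 <;> ring_nf
  · have := step_real1 (a : ℝ) (b : ℝ) (by exact_mod_cast ha) (by exact_mod_cast h)
    unfold Fab
    push_cast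
    ring_nf
    ring_nf at this
    convert this using 2 <;> ring_nf

lemma Fab_lt_aux : ∀ (k a b c d : ℕ), c - a = k → a + b = c + d → a < c → c ≤ d →
    Fab a b < Fab c d := by
  intro k
  induction k with
  | zero => intro a b c d hk _ hac _; omega
  | succ k ih =>
    intro a b c d hk hsum hac hcd
    have hb : b = (b - 1) + 1 := by omega
    have hstep : Fab a b < Fab (a+1) (b-1) := by
      rw [hb]
      exact Fab_step a (b-1) (by omega)
    rcases Nat.lt_or_ge (a+1) c with h1 | h1
    · exact hstep.trans (ih (a+1) (b-1) c d (by omega) (by omega) h1 hcd)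
    · have : a + 1 = c := by omega
      have : Fab (a+1) (b-1) = Fab c d := by rw [this]; congr 1; omega
      rwa [this] at hstep

lemma Fab_lt {a b c d : ℕ} (hsum : a + b = c + d) (hac : a < c) (hcd : c ≤ d) :
    Fab a b < Fab c d := Fab_lt_aux (c - a) a b c d rfl hsum hac hcd

lemma Fab_le {a b c d : ℕ} (hsum : a + b = c + d) (hac : a ≤ c) (hcd : c ≤ d) :
    Fab a b ≤ Fab c d := by
  rcases Nat.lt_or_ge a c with h | h
  · exact (Fab_lt hsum h hcd).le
  · have : a = c := by omega
    subst this
    have : b = d := by omega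
    rw [this]


variable {V : Type*} [Fintype V] [DecidableEq V]

/-- `G` is a double star with centers `u, v` and pendant sets `s` (at `u`) and `t` (at `v`). -/
structure DS (G : SimpleGraph V) (u v : V) (s t : Finset V) : Prop where
  huv : G.Adj u v
  hus : u ∉ s
  hut : u ∉ t
  hvs : v ∉ s
  hvt : v ∉ t
  hst : Disjoint s t
  hcov : ∀ w, w ≠ u → w ≠ v → w ∈ s ∪ t
  hadj : ∀ a b, G.Adj a b ↔
    (a = u ∧ b = v) ∨ (a = v ∧ b = u) ∨ (a = u ∧ b ∈ s) ∨ (b = u ∧ a ∈ s) ∨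
    (a = v ∧ b ∈ t) ∨ (b = v ∧ a ∈ t)

namespace DS

variable {G : SimpleGraph V} {u v : V} {s t : Finset V}

lemma hne (h : DS G u v s t) : u ≠ v := h.huv.ne

lemma mem_s_ne_u (h : DS G u v s t) {w : V} (hw : w ∈ s) : w ≠ u :=
  fun h' => h.hus (h' ▸ hw)
lemma mem_s_ne_v (h : DS G u v s t) {w : V} (hw : w ∈ s) : w ≠ v :=
  fun h' => h.hvs (h' ▸ hw)
lemma mem_t_ne_u (h : DS G u v s t) {w : V} (hw : w ∈ t) : w ≠ u :=
  fun h' => h.hut (h' ▸ hw)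
lemma mem_t_ne_v (h : DS G u v s t) {w : V} (hw : w ∈ t) : w ≠ v :=
  fun h' => h.hvt (h' ▸ hw)

lemma nbr_u (h : DS G u v s t) [DecidableRel G.Adj] :
    G.neighborFinset u = insert v s := by
  ext w
  rw [mem_neighborFinset, h.hadj, Finset.mem_insert]
  constructor
  · rintro (⟨-, rfl⟩ | ⟨h1, -⟩ | ⟨-, h2⟩ | ⟨rfl, h2⟩ | ⟨h1, -⟩ | ⟨-, h2⟩)
    · exact Or.inl rfl
    · exact absurd h1 h.hne
    · exact Or.inr h2
    · exact absurd h2 h.hus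
    · exact absurd h1 h.hne
    · exact absurd h2 h.hut
  · rintro (rfl | hw)
    · exact Or.inl ⟨rfl, rfl⟩
    · exact Or.inr (Or.inr (Or.inl ⟨rfl, hw⟩))

lemma nbr_v (h : DS G u v s t) [DecidableRel G.Adj] :
    G.neighborFinset v = insert u t := by
  ext w
  rw [mem_neighborFinset, h.hadj, Finset.mem_insert]
  constructor
  · rintro (⟨h1, -⟩ | ⟨-, rfl⟩ | ⟨h1, -⟩ | ⟨-, h2⟩ | ⟨-, h2⟩ | ⟨rfl, h2⟩)
    · exact absurd h1 h.hne.symm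
    · exact Or.inl rfl
    · exact absurd h1 h.hne.symm
    · exact absurd h2 h.hvs
    · exact Or.inr h2
    · exact absurd h2 h.hvt
  · rintro (rfl | hw)
    · exact Or.inr (Or.inl ⟨rfl, rfl⟩)
    · exact Or.inr (Or.inr (Or.inr (Or.inr (Or.inl ⟨rfl, hw⟩))))

lemma nbr_s (h : DS G u v s t) [DecidableRel G.Adj] {w : V} (hw : w ∈ s) :
    G.neighborFinset w = {u} := by
  have hwu := h.mem_s_ne_u hw
  have hwv := h.mem_s_ne_v hw
  have hwt : w ∉ t := fun h' => (Finset.disjoint_left.1 h.hst hw) h'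
  ext z
  rw [mem_neighborFinset, h.hadj, Finset.mem_singleton]
  constructor
  · rintro (⟨h1, -⟩ | ⟨h1, -⟩ | ⟨h1, -⟩ | ⟨rfl, -⟩ | ⟨h1, -⟩ | ⟨-, h2⟩)
    · exact absurd h1 hwu
    · exact absurd h1 hwv
    · exact absurd h1 hwu
    · rfl
    · exact absurd h1 hwv
    · exact absurd h2 hwt
  · rintro rfl
    exact Or.inr (Or.inr (Or.inr (Or.inl ⟨rfl, hw⟩)))

lemma nbr_t (h : DS G u v s t) [DecidableRel G.Adj] {w : V} (hw : w ∈ t) :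
    G.neighborFinset w = {v} := by
  have hwu := h.mem_t_ne_u hw
  have hwv := h.mem_t_ne_v hw
  have hws : w ∉ s := fun h' => (Finset.disjoint_left.1 h.hst h') hw
  ext z
  rw [mem_neighborFinset, h.hadj, Finset.mem_singleton]
  constructor
  · rintro (⟨h1, -⟩ | ⟨h1, -⟩ | ⟨h1, -⟩ | ⟨-, h2⟩ | ⟨h1, -⟩ | ⟨rfl, -⟩)
    · exact absurd h1 hwu
    · exact absurd h1 hwv
    · exact absurd h1 hwu
    · exact absurd h2 hws
    · exact absurd h1 hwv
    · rfl
  · rintro rfl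
    exact Or.inr (Or.inr (Or.inr (Or.inr (Or.inr ⟨rfl, hw⟩))))

lemma degree_u (h : DS G u v s t) [DecidableRel G.Adj] : G.degree u = s.card + 1 := by
  rw [← card_neighborFinset_eq_degree, h.nbr_u, Finset.card_insert_of_notMem h.hvs]

lemma degree_v (h : DS G u v s t) [DecidableRel G.Adj] : G.degree v = t.card + 1 := by
  rw [← card_neighborFinset_eq_degree, h.nbr_v, Finset.card_insert_of_notMem h.hut]

lemma degree_s (h : DS G u v s t) [DecidableRel G.Adj] {w : V} (hw : w ∈ s) :
    G.degree w = 1 := by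
  rw [← card_neighborFinset_eq_degree, h.nbr_s hw, Finset.card_singleton]

lemma degree_t (h : DS G u v s t) [DecidableRel G.Adj] {w : V} (hw : w ∈ t) :
    G.degree w = 1 := by
  rw [← card_neighborFinset_eq_degree, h.nbr_t hw, Finset.card_singleton]

lemma card_V (h : DS G u v s t) : Fintype.card V = s.card + t.card + 2 := by
  have huniv : (Finset.univ : Finset V) = insert u (insert v (s ∪ t)) := by
    ext w
    simp only [Finset.mem_univ, true_iff, mem_insert, Finset.mem_union]
    by_cases h1 : w = u
    · exact Or.inl h1
    by_cases h2 : w = v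
    · exact Or.inr (Or.inl h2)
    · rcases Finset.mem_union.1 (h.hcov w h1 h2) with hw | hw
      · exact Or.inr (Or.inr (Or.inl hw))
      · exact Or.inr (Or.inr (Or.inr hw))
  have h1 : u ∉ insert v (s ∪ t) := by
    simp only [Finset.mem_insert, Finset.mem_union]
    push_neg
    exact ⟨h.hne, h.hus, h.hut⟩
  have h2 : v ∉ s ∪ t := by
    simp only [Finset.mem_union]
    push_neg
    exact ⟨h.hvs, h.hvt⟩
  rw [← Finset.card_univ, huniv, Finset.card_insert_of_notMem h1,
    Finset.card_insert_of_notMem h2, Finset.card_union_of_disjoint h.hst]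

lemma edges (h : DS G u v s t) [DecidableRel G.Adj] :
    G.edgeFinset = insert s(u,v)
      ((s.image fun w => s(u,w)) ∪ (t.image fun w => s(v,w))) := by
  ext e
  induction e with
  | _ a b =>
    simp only [mem_edgeFinset, mem_edgeSet, h.hadj, mem_insert, Finset.mem_union,
      Finset.mem_image, Sym2.eq_iff]
    constructor
    · rintro (⟨rfl, rfl⟩ | ⟨rfl, rfl⟩ | ⟨rfl, hb⟩ | ⟨rfl, ha⟩ | ⟨rfl, hb⟩ | ⟨rfl, ha⟩)
      · exact Or.inl (Or.inl ⟨rfl, rfl⟩)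
      · exact Or.inl (Or.inr ⟨rfl, rfl⟩)
      · exact Or.inr (Or.inl ⟨b, hb, Or.inl ⟨rfl, rfl⟩⟩)
      · exact Or.inr (Or.inl ⟨a, ha, Or.inr ⟨rfl, rfl⟩⟩)
      · exact Or.inr (Or.inr ⟨b, hb, Or.inl ⟨rfl, rfl⟩⟩)
      · exact Or.inr (Or.inr ⟨a, ha, Or.inr ⟨rfl, rfl⟩⟩)
    · rintro ((⟨rfl, rfl⟩ | ⟨rfl, rfl⟩) | ⟨w, hw, (⟨rfl, rfl⟩ | ⟨rfl, rfl⟩)⟩ |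
        ⟨w, hw, (⟨rfl, rfl⟩ | ⟨rfl, rfl⟩)⟩)
      · exact Or.inl ⟨rfl, rfl⟩
      · exact Or.inr (Or.inl ⟨rfl, rfl⟩)
      · exact Or.inr (Or.inr (Or.inl ⟨rfl, hw⟩))
      · exact Or.inr (Or.inr (Or.inr (Or.inl ⟨rfl, hw⟩)))
      · exact Or.inr (Or.inr (Or.inr (Or.inr (Or.inl ⟨rfl, hw⟩))))
      · exact Or.inr (Or.inr (Or.inr (Or.inr (Or.inr ⟨rfl, hw⟩))))

end DS


variable {G : SimpleGraph V} {u v : V} {s t : Finset V}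

lemma DS.expM2_val (h : DS G u v s t) [DecidableRel G.Adj] :
    expM2 G = Fab s.card t.card := by
  classical
  rw [expM2_eq_sum, h.edges]
  have hnotmem : s(u,v) ∉ (s.image fun w => s(u,w)) ∪ (t.image fun w => s(v,w)) := by
    intro hmem
    simp only [Finset.mem_union, Finset.mem_image, Sym2.eq_iff] at hmem
    rcases hmem with ⟨w, hw, (⟨-, rfl⟩ | ⟨h1, -⟩)⟩ | ⟨w, hw, (⟨h1, -⟩ | ⟨-, rfl⟩)⟩
    · exact h.hvs hw
    · exact h.hne h1
    · exact h.hne h1.symm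
    · exact h.hut hw
  have hdisj : Disjoint (s.image fun w => s(u,w)) (t.image fun w => s(v,w)) := by
    rw [Finset.disjoint_left]
    intro e he1 he2
    simp only [Finset.mem_image] at he1 he2
    obtain ⟨w, hw, rfl⟩ := he1
    obtain ⟨w', hw', he⟩ := he2
    rcases Sym2.eq_iff.1 he with ⟨h1, -⟩ | ⟨h2, -⟩
    · exact h.hne h1.symm
    · exact h.hvs (h2 ▸ hw)
  have hinj1 : ∀ w ∈ s, ∀ w' ∈ s, s(u,w) = s(u,w') → w = w' := by
    intro w hw w' hw' he
    rcases Sym2.eq_iff.1 he with ⟨-, h2⟩ | ⟨h1, -⟩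
    · exact h2
    · exact absurd (h1 ▸ hw') h.hus
  have hinj2 : ∀ w ∈ t, ∀ w' ∈ t, s(v,w) = s(v,w') → w = w' := by
    intro w hw w' hw' he
    rcases Sym2.eq_iff.1 he with ⟨-, h2⟩ | ⟨h1, -⟩
    · exact h2
    · exact absurd (h1 ▸ hw') h.hvt
  rw [Finset.sum_insert hnotmem, Finset.sum_union hdisj,
    Finset.sum_image hinj1, Finset.sum_image hinj2]
  have hs : ∀ w ∈ s, (Sym2.lift ⟨fun a b => Real.exp ((G.degree a : ℝ) * (G.degree b : ℝ)),
      fun a b => by simp only []; rw [mul_comm]⟩ s(u,w) : ℝ)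
      = Real.exp ((s.card : ℝ) + 1) := by
    intro w hw
    rw [Sym2.lift_mk]
    dsimp only
    rw [h.degree_u, h.degree_s hw]
    push_cast
    ring_nf
  have ht : ∀ w ∈ t, (Sym2.lift ⟨fun a b => Real.exp ((G.degree a : ℝ) * (G.degree b : ℝ)),
      fun a b => by simp only []; rw [mul_comm]⟩ s(v,w) : ℝ)
      = Real.exp ((t.card : ℝ) + 1) := by
    intro w hw
    rw [Sym2.lift_mk]
    dsimp only
    rw [h.degree_v, h.degree_t hw]
    push_cast
    ring_nf
  rw [Finset.sum_congr rfl hs, Finset.sum_congr rfl ht, Finset.sum_const, Finset.sum_const,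
    Sym2.lift_mk]
  dsimp only
  rw [h.degree_u, h.degree_v]
  unfold Fab
  push_cast
  ring


variable {V : Type*} [Fintype V] [DecidableEq V]

lemma tree_no_tri {G : SimpleGraph V} (hT : G.IsTree) {a b c : V}
    (hab : G.Adj a b) (hac : G.Adj a c) (hbc : G.Adj b c) : False := by
  have hp1 : (Walk.cons hab Walk.nil).IsPath := by simp [hab.ne]
  have hp2 : (Walk.cons hac (Walk.cons hbc.symm Walk.nil)).IsPath := by
    simp [hac.ne, hab.ne, hbc.ne', hbc.ne]
  have := (hT.existsUnique_path a b).unique hp1 hp2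
  simpa using congrArg Walk.length this

lemma tree_no_c4 {G : SimpleGraph V} (hT : G.IsTree) {a b c d : V}
    (hab : G.Adj a b) (hbc : G.Adj b c) (hcd : G.Adj c d) (had : G.Adj a d)
    (hac : a ≠ c) (hbd : b ≠ d) : False := by
  have hp1 : (Walk.cons had Walk.nil).IsPath := by simp [had.ne]
  have hp2 : (Walk.cons hab (Walk.cons hbc (Walk.cons hcd Walk.nil))).IsPath := by
    simp [hab.ne, hbc.ne, hcd.ne, hac, hbd, had.ne, Ne.symm hac, Ne.symm hbd,
      hab.ne', hbc.ne', hcd.ne', had.ne']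
  have := (hT.existsUnique_path a d).unique hp1 hp2
  simpa using congrArg Walk.length this

lemma nbr_disjoint {G : SimpleGraph V} (hT : G.IsTree) [DecidableRel G.Adj] {u v : V}
    (huv : G.Adj u v) : Disjoint (G.neighborFinset u) (G.neighborFinset v) := by
  rw [Finset.disjoint_left]
  intro w hwu hwv
  rw [mem_neighborFinset] at hwu hwv
  exact tree_no_tri hT huv hwu hwv

lemma deg_sum_le {G : SimpleGraph V} (hT : G.IsTree) [DecidableRel G.Adj] {u v : V}
    (huv : G.Adj u v) : G.degree u + G.degree v ≤ Fintype.card V := by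
  rw [← card_neighborFinset_eq_degree, ← card_neighborFinset_eq_degree,
    ← Finset.card_union_of_disjoint (nbr_disjoint hT huv)]
  exact Finset.card_le_card (Finset.subset_univ _)

lemma ds_of_max {G : SimpleGraph V} (hT : G.IsTree) [DecidableRel G.Adj] {u v : V}
    (huv : G.Adj u v) (hsum : G.degree u + G.degree v = Fintype.card V) :
    DS G u v ((G.neighborFinset u).erase v) ((G.neighborFinset v).erase u) := by
  have huniv : G.neighborFinset u ∪ G.neighborFinset v = Finset.univ := by
    apply Finset.eq_univ_of_card
    rw [Finset.card_union_of_disjoint (nbr_disjoint hT huv),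
      card_neighborFinset_eq_degree, card_neighborFinset_eq_degree, hsum]
  have hnu : u ∉ G.neighborFinset u := by simp
  have hnv : v ∉ G.neighborFinset v := by simp
  refine ⟨huv, ?_, ?_, ?_, ?_, ?_, ?_, ?_⟩
  · exact fun h => hnu (Finset.mem_of_mem_erase h)
  · exact fun h => (Finset.ne_of_mem_erase h) rfl
  · exact fun h => (Finset.ne_of_mem_erase h) rfl
  · exact fun h => hnv (Finset.mem_of_mem_erase h)
  · exact Finset.disjoint_of_subset_left (Finset.erase_subset _ _)
      (Finset.disjoint_of_subset_right (Finset.erase_subset _ _) (nbr_disjoint hT huv))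
  · intro w hwu hwv
    have : w ∈ G.neighborFinset u ∪ G.neighborFinset v := huniv ▸ Finset.mem_univ w
    rcases Finset.mem_union.1 this with hw | hw
    · exact Finset.mem_union_left _ (Finset.mem_erase.2 ⟨hwv, hw⟩)
    · exact Finset.mem_union_right _ (Finset.mem_erase.2 ⟨hwu, hw⟩)
  · intro a b
    constructor
    · intro hadj
      by_cases hau : a = u
      · subst hau
        by_cases hbv : b = v
        · exact Or.inl ⟨rfl, hbv⟩
        · exact Or.inr (Or.inr (Or.inl ⟨rfl,
            Finset.mem_erase.2 ⟨hbv, (mem_neighborFinset _ _ _).2 hadj⟩⟩))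
      by_cases hav : a = v
      · subst hav
        by_cases hbu : b = u
        · exact Or.inr (Or.inl ⟨rfl, hbu⟩)
        · exact Or.inr (Or.inr (Or.inr (Or.inr (Or.inl ⟨rfl,
            Finset.mem_erase.2 ⟨hbu, (mem_neighborFinset _ _ _).2 hadj⟩⟩))))
      by_cases hbu : b = u
      · subst hbu
        exact Or.inr (Or.inr (Or.inr (Or.inl ⟨rfl,
          Finset.mem_erase.2 ⟨hav, (mem_neighborFinset _ _ _).2 hadj.symm⟩⟩)))
      by_cases hbv : b = v
      · subst hbv
        exact Or.inr (Or.inr (Or.inr (Or.inr (Or.inr ⟨rfl,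
          Finset.mem_erase.2 ⟨hau, (mem_neighborFinset _ _ _).2 hadj.symm⟩⟩))))
      -- a, b both not in {u, v} : contradiction
      exfalso
      have ha : a ∈ G.neighborFinset u ∪ G.neighborFinset v := huniv ▸ Finset.mem_univ a
      have hb : b ∈ G.neighborFinset u ∪ G.neighborFinset v := huniv ▸ Finset.mem_univ b
      rw [Finset.mem_union, mem_neighborFinset, mem_neighborFinset] at ha hb
      rcases ha with ha | ha <;> rcases hb with hb | hb
      · exact tree_no_tri hT hadj ha.symm hb.symm
      · exact tree_no_c4 hT ha hadj hb.symm huv (Ne.symm hbu) hav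
      · exact tree_no_c4 hT hb hadj.symm ha.symm huv (Ne.symm hau) hbv
      · exact tree_no_tri hT hadj ha.symm hb.symm
    · rintro (⟨rfl, rfl⟩ | ⟨rfl, rfl⟩ | ⟨rfl, hb⟩ | ⟨rfl, ha⟩ | ⟨rfl, hb⟩ | ⟨rfl, ha⟩)
      · exact huv
      · exact huv.symm
      · exact (mem_neighborFinset _ _ _).1 (Finset.mem_of_mem_erase hb)
      · exact ((mem_neighborFinset _ _ _).1 (Finset.mem_of_mem_erase ha)).symm
      · exact (mem_neighborFinset _ _ _).1 (Finset.mem_of_mem_erase hb)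
      · exact ((mem_neighborFinset _ _ _).1 (Finset.mem_of_mem_erase ha)).symm

namespace DS

lemma iso_of_card {V' : Type*} [Fintype V'] [DecidableEq V']
    {G : SimpleGraph V} {G' : SimpleGraph V'} {u v : V} {s t : Finset V}
    {u' v' : V'} {s' t' : Finset V'}
    (h : DS G u v s t) (h' : DS G' u' v' s' t')
    (hs : s.card = s'.card) (ht : t.card = t'.card) : Nonempty (G ≃g G') := by
  classical
  have es : {w // w ∈ s} ≃ {w // w ∈ s'} :=
    Fintype.equivOfCardEq (by rw [Fintype.card_coe, Fintype.card_coe, hs])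
  have et : {w // w ∈ t} ≃ {w // w ∈ t'} :=
    Fintype.equivOfCardEq (by rw [Fintype.card_coe, Fintype.card_coe, ht])
  set f : V → V' := fun w =>
    if hw : w ∈ s then (es ⟨w, hw⟩ : V')
    else if hw : w ∈ t then (et ⟨w, hw⟩ : V')
    else if w = u then u' else v' with hf
  have hfu : f u = u' := by simp [hf, h.hus, h.hut]
  have hfv : f v = v' := by
    simp only [hf, dif_neg h.hvs, dif_neg h.hvt, if_neg h.hne.symm]
  have hfs : ∀ w (hw : w ∈ s), f w = (es ⟨w, hw⟩ : V') := by
    intro w hw; simp only [hf, dif_pos hw]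
  have hft : ∀ w (hw : w ∈ t), f w = (et ⟨w, hw⟩ : V') := by
    intro w hw
    have hws : w ∉ s := fun h2 => (Finset.disjoint_left.1 h.hst h2) hw
    simp only [hf, dif_neg hws, dif_pos hw]
  have hfs' : ∀ w (hw : w ∈ s), f w ∈ s' := fun w hw => by rw [hfs w hw]; exact (es ⟨w, hw⟩).2
  have hft' : ∀ w (hw : w ∈ t), f w ∈ t' := fun w hw => by rw [hft w hw]; exact (et ⟨w, hw⟩).2
  -- classification of values
  have hclass : ∀ w : V, w ∈ s ∨ w ∈ t ∨ w = u ∨ w = v := by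
    intro w
    by_cases h1 : w = u
    · exact Or.inr (Or.inr (Or.inl h1))
    by_cases h2 : w = v
    · exact Or.inr (Or.inr (Or.inr h2))
    · rcases Finset.mem_union.1 (h.hcov w h1 h2) with hw | hw
      · exact Or.inl hw
      · exact Or.inr (Or.inl hw)
  have hs'iff : ∀ w, f w ∈ s' ↔ w ∈ s := by
    intro w
    refine ⟨fun hw => ?_, fun hw => hfs' w hw⟩
    rcases hclass w with h1 | h1 | rfl | rfl
    · exact h1
    · exact absurd hw (fun hc => (Finset.disjoint_left.1 h'.hst hc) (hft' w h1))
    · rw [hfu] at hw; exact absurd hw h'.hus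
    · rw [hfv] at hw; exact absurd hw h'.hvs
  have ht'iff : ∀ w, f w ∈ t' ↔ w ∈ t := by
    intro w
    refine ⟨fun hw => ?_, fun hw => hft' w hw⟩
    rcases hclass w with h1 | h1 | rfl | rfl
    · exact absurd (hfs' w h1) (fun hc => (Finset.disjoint_left.1 h'.hst hc) hw)
    · exact h1
    · rw [hfu] at hw; exact absurd hw h'.hut
    · rw [hfv] at hw; exact absurd hw h'.hvt
  have hu'iff : ∀ w, f w = u' ↔ w = u := by
    intro w
    refine ⟨fun hw => ?_, fun hw => by rw [hw, hfu]⟩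
    rcases hclass w with h1 | h1 | rfl | rfl
    · exact absurd (hw ▸ hfs' w h1) h'.hus
    · exact absurd (hw ▸ hft' w h1) h'.hut
    · rfl
    · rw [hfv] at hw; exact absurd hw.symm h'.hne
  have hv'iff : ∀ w, f w = v' ↔ w = v := by
    intro w
    refine ⟨fun hw => ?_, fun hw => by rw [hw, hfv]⟩
    rcases hclass w with h1 | h1 | rfl | rfl
    · exact absurd (hw ▸ hfs' w h1) h'.hvs
    · exact absurd (hw ▸ hft' w h1) h'.hvt
    · rw [hfu] at hw; exact absurd hw h'.hne
    · rfl
  have hinj : Function.Injective f := by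
    intro a b hab
    rcases hclass a with h1 | h1 | rfl | rfl
    · have hb : b ∈ s := (hs'iff b).1 (hab ▸ hfs' a h1)
      have := (hfs a h1).symm.trans (hab.trans (hfs b hb))
      have := es.injective (Subtype.coe_injective this)
      exact congrArg Subtype.val this
    · have hb : b ∈ t := (ht'iff b).1 (hab ▸ hft' a h1)
      have := (hft a h1).symm.trans (hab.trans (hft b hb))
      have := et.injective (Subtype.coe_injective this)
      exact congrArg Subtype.val this
    · exact ((hu'iff b).1 (hab.symm.trans hfu)).symm
    · exact ((hv'iff b).1 (hab.symm.trans hfv)).symm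
  have hbij : Function.Bijective f := by
    rw [Fintype.bijective_iff_injective_and_card]
    exact ⟨hinj, by rw [h.card_V, h'.card_V, hs, ht]⟩
  refine ⟨⟨Equiv.ofBijective f hbij, ?_⟩⟩
  intro a b
  show G'.Adj (f a) (f b) ↔ G.Adj a b
  rw [h.hadj a b, h'.hadj (f a) (f b)]
  rw [hu'iff, hu'iff, hv'iff, hv'iff, hs'iff, hs'iff, ht'iff, ht'iff]

end DS


variable (n x : ℕ)

/-- pendant set at the center `0`. -/
def sD (hx : x + 2 ≤ n) : Finset (Fin n) :=
  (Finset.Ico 2 (x+2)).attachFin (fun m hm => lt_of_lt_of_le (Finset.mem_Ico.1 hm).2 hx)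

/-- pendant set at the center `1`. -/
def tD : Finset (Fin n) :=
  (Finset.Ico (x+2) n).attachFin (fun m hm => (Finset.mem_Ico.1 hm).2)

lemma sD_card (hx : x + 2 ≤ n) : (sD n x hx).card = x := by
  rw [sD, Finset.card_attachFin, Nat.card_Ico]; omega

lemma tD_card : (tD n x).card = n - x - 2 := by
  rw [tD, Finset.card_attachFin, Nat.card_Ico]; omega

lemma ds_doubleStar (hn : 2 ≤ n) (hx : x + 2 ≤ n) :
    DS (doubleStarOn n x) ⟨0, by omega⟩ ⟨1, by omega⟩ (sD n x hx) (tD n x) := by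
  have hmem_s : ∀ w : Fin n, w ∈ sD n x hx ↔ 2 ≤ w.val ∧ w.val < x + 2 := by
    intro w; rw [sD, Finset.mem_attachFin, Finset.mem_Ico]
  have hmem_t : ∀ w : Fin n, w ∈ tD n x ↔ x + 2 ≤ w.val := by
    intro w; rw [tD, Finset.mem_attachFin, Finset.mem_Ico]
    exact ⟨fun h => h.1, fun h => ⟨h, w.isLt⟩⟩
  have hadj : ∀ a b : Fin n, (doubleStarOn n x).Adj a b ↔ a.val ≠ b.val ∧
      ((a.val = 0 ∧ b.val = 1) ∨ (a.val = 0 ∧ 2 ≤ b.val ∧ b.val < x + 2) ∨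
        (a.val = 1 ∧ x + 2 ≤ b.val) ∨ (b.val = 0 ∧ a.val = 1) ∨
        (b.val = 0 ∧ 2 ≤ a.val ∧ a.val < x + 2) ∨ (b.val = 1 ∧ x + 2 ≤ a.val)) := by
    intro a b
    rw [doubleStarOn, fromRel_adj]
    constructor
    · rintro ⟨hne, h | h⟩
      · exact ⟨fun hv => hne (Fin.ext hv), by tauto⟩
      · exact ⟨fun hv => hne (Fin.ext hv), by tauto⟩
    · rintro ⟨hne, h⟩
      exact ⟨fun hv => hne (congrArg Fin.val hv), by tauto⟩
  refine ⟨?_, ?_, ?_, ?_, ?_, ?_, ?_, ?_⟩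
  · rw [hadj]; simp
  · rw [hmem_s]; simp
  · rw [hmem_t]; simp
  · rw [hmem_s]; simp
  · rw [hmem_t]; simp
  · rw [Finset.disjoint_left]
    intro w hw1 hw2
    rw [hmem_s] at hw1; rw [hmem_t] at hw2; omega
  · intro w hw0 hw1
    have h0 : w.val ≠ 0 := fun h => hw0 (Fin.ext h)
    have h1 : w.val ≠ 1 := fun h => hw1 (Fin.ext h)
    rw [Finset.mem_union, hmem_s, hmem_t]; omega
  · intro a b
    rw [hadj]
    have e0 : ∀ c : Fin n, (c = (⟨0, by omega⟩ : Fin n)) ↔ c.val = 0 :=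
      fun c => ⟨fun h => congrArg Fin.val h, fun h => Fin.ext h⟩
    have e1 : ∀ c : Fin n, (c = (⟨1, by omega⟩ : Fin n)) ↔ c.val = 1 :=
      fun c => ⟨fun h => congrArg Fin.val h, fun h => Fin.ext h⟩
    rw [e0, e1, e0, e1, hmem_s, hmem_s, hmem_t, hmem_t]
    omega


end Helper13

lemma lt_exp_half (m : ℝ) (hm : 0 ≤ m) : m < Real.exp (m/2) := by
  rcases eq_or_lt_of_le hm with h | h
  · rw [← h]; positivity
  · have h1 : 1 + m/4 < Real.exp (m/4) := by
      have := Real.add_one_lt_exp (show m/4 ≠ 0 by positivity)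
      linarith
    have h2 : Real.exp (m/2) = Real.exp (m/4) * Real.exp (m/4) := by
      rw [← Real.exp_add]; ring_nf
    nlinarith [sq_nonneg (1 - m/4), Real.exp_pos (m/4)]

lemma prod_ge (n : ℕ) (hn : 4 ≤ n) :
    n^2 ≤ 4 * (((n-2)/2 + 1) * (n - 2 - (n-2)/2 + 1)) + 1 := by
  obtain ⟨k, hk | hk⟩ := Nat.even_or_odd' n
  · have h1 : (n-2)/2 + 1 = k := by omega
    have h2 : n - 2 - (n-2)/2 + 1 = k := by omega
    rw [h1, h2]
    subst hk
    nlinarith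
  · have h1 : (n-2)/2 + 1 = k := by omega
    have h2 : n - 2 - (n-2)/2 + 1 = k + 1 := by omega
    rw [h1, h2]
    subst hk
    nlinarith

open Helper13 in
theorem stmt_13 (n : ℕ) (hn : 4 ≤ n) (T : SimpleGraph (Fin n)) (hT : T.IsTree) :
    expM2 T ≤ expM2 (doubleStarOn n ((n - 2) / 2)) ∧
      (expM2 T = expM2 (doubleStarOn n ((n - 2) / 2)) →
        Nonempty (T ≃g doubleStarOn n ((n - 2) / 2))) := by
  classical
  set x := (n - 2) / 2 with hxdef
  set y := n - 2 - x with hydef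
  have hx2 : x + 2 ≤ n := by omega
  have hxy : x ≤ y := by omega
  have hDds := ds_doubleStar n x (by omega) hx2
  have hDval : expM2 (doubleStarOn n x) = Fab x y := by
    rw [hDds.expM2_val, sD_card, tD_card]
    congr 1
    omega
  by_cases hA : ∃ u v : Fin n, T.Adj u v ∧ T.degree u + T.degree v = n
  · obtain ⟨u₀, v₀, huv₀, hsum₀⟩ := hA
    obtain ⟨u, v, huv, hsum, hle⟩ : ∃ u v : Fin n, T.Adj u v ∧
        T.degree u + T.degree v = n ∧ T.degree u ≤ T.degree v := by
      rcases le_total (T.degree u₀) (T.degree v₀) with h | h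
      · exact ⟨u₀, v₀, huv₀, hsum₀, h⟩
      · exact ⟨v₀, u₀, huv₀.symm, by omega, h⟩
    have hTds := ds_of_max hT huv (by rw [Fintype.card_fin]; exact hsum)
    have hTval : expM2 T = Fab ((T.neighborFinset u).erase v).card
        ((T.neighborFinset v).erase u).card := hTds.expM2_val
    set a' := ((T.neighborFinset u).erase v).card with ha'def
    set b' := ((T.neighborFinset v).erase u).card with hb'def
    have hacard : a' = T.degree u - 1 := by
      rw [ha'def, Finset.card_erase_of_mem ((mem_neighborFinset _ _ _).2 huv),
        card_neighborFinset_eq_degree]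
    have hbcard : b' = T.degree v - 1 := by
      rw [hb'def, Finset.card_erase_of_mem ((mem_neighborFinset _ _ _).2 huv.symm),
        card_neighborFinset_eq_degree]
    have hdegu : 1 ≤ T.degree u := by
      rw [← card_neighborFinset_eq_degree]
      exact Finset.card_pos.2 ⟨v, (mem_neighborFinset _ _ _).2 huv⟩
    have hdegv : 1 ≤ T.degree v := by
      rw [← card_neighborFinset_eq_degree]
      exact Finset.card_pos.2 ⟨u, (mem_neighborFinset _ _ _).2 huv.symm⟩
    have hsum' : a' + b' = n - 2 := by omega
    have hab' : a' ≤ b' := by omega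
    have ha'x : a' ≤ x := by omega
    constructor
    · rw [hTval, hDval]
      exact Fab_le (by omega) ha'x (by omega)
    · intro heq
      have hax : a' = x := by
        by_contra hne
        have := Fab_lt (show a' + b' = x + y by omega) (by omega) (by omega)
        rw [hTval, hDval] at heq
        linarith
      exact hTds.iso_of_card hDds (by rw [sD_card]; omega) (by rw [tD_card]; omega)
  · push_neg at hA
    have hbound : ∀ e ∈ T.edgeFinset,
        Sym2.lift ⟨fun a b => Real.exp ((T.degree a : ℝ) * (T.degree b : ℝ)),
          fun a b => by simp only []; rw [mul_comm]⟩ e ≤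
          Real.exp ((((n:ℝ)-1)/2)^2) := by
      intro e he
      induction e with
      | _ a b =>
        have hadj : T.Adj a b := by rwa [mem_edgeFinset, mem_edgeSet] at he
        have h1 := deg_sum_le hT hadj
        rw [Fintype.card_fin] at h1
        have h2 := hA a b hadj
        have h3 : T.degree a + T.degree b ≤ n - 1 := by omega
        rw [Sym2.lift_mk]
        dsimp only
        apply Real.exp_le_exp.2
        have hcast : (T.degree a : ℝ) + (T.degree b : ℝ) ≤ (n:ℝ) - 1 := by
          have h4 : T.degree a + T.degree b + 1 ≤ n := by omega
          have h5 : ((T.degree a + T.degree b + 1 : ℕ) : ℝ) ≤ ((n:ℕ) : ℝ) :=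
            Nat.cast_le.2 h4
          push_cast at h5
          linarith
        have hpa : (0:ℝ) ≤ (T.degree a : ℝ) := Nat.cast_nonneg _
        have hpb : (0:ℝ) ≤ (T.degree b : ℝ) := Nat.cast_nonneg _
        nlinarith [sq_nonneg ((T.degree a : ℝ) - (T.degree b : ℝ))]
    have hcardE : T.edgeFinset.card = n - 1 := by
      have := hT.card_edgeFinset
      rw [Fintype.card_fin] at this
      omega
    have hsum_le : expM2 T ≤ ((n:ℝ) - 1) * Real.exp ((((n:ℝ)-1)/2)^2) := by
      rw [expM2_eq_sum]
      refine le_trans (Finset.sum_le_card_nsmul _ _ _ hbound) ?_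
      rw [hcardE, nsmul_eq_mul]
      have : (((n-1:ℕ)):ℝ) = (n:ℝ) - 1 := by
        rw [Nat.cast_sub (by omega)]; norm_num
      rw [this]
    have hprod : ((n:ℝ)^2 - 1) / 4 ≤ ((x:ℝ)+1) * ((y:ℝ)+1) := by
      have := prod_ge n hn
      have hc : ((n^2 : ℕ) : ℝ) ≤ ((4 * ((x + 1) * (y + 1)) + 1 : ℕ) : ℝ) := by
        exact_mod_cast this
      push_cast at hc
      linarith
    have hmain : ((n:ℝ) - 1) * Real.exp ((((n:ℝ)-1)/2)^2) <
        Real.exp (((x:ℝ)+1) * ((y:ℝ)+1)) := by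
      have h1 : (n:ℝ) - 1 < Real.exp (((n:ℝ)-1)/2) := by
        exact lt_exp_half ((n:ℝ)-1) (by
          have : (1:ℝ) ≤ (n:ℝ) := by exact_mod_cast (by omega : 1 ≤ n)
          linarith)
      have h2 : Real.exp ((((n:ℝ)-1)/2)^2) * Real.exp (((n:ℝ)-1)/2) =
          Real.exp (((n:ℝ)^2-1)/4) := by
        rw [← Real.exp_add]
        congr 1
        ring
      have h3 : Real.exp (((n:ℝ)^2-1)/4) ≤ Real.exp (((x:ℝ)+1) * ((y:ℝ)+1)) :=
        Real.exp_le_exp.2 hprod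
      have h4 : 0 < Real.exp ((((n:ℝ)-1)/2)^2) := Real.exp_pos _
      nlinarith
    have hD_ge : Real.exp (((x:ℝ)+1) * ((y:ℝ)+1)) ≤ expM2 (doubleStarOn n x) := by
      rw [hDval]
      unfold Fab
      have h1 : (0:ℝ) ≤ (x:ℝ) * Real.exp ((x:ℝ)+1) := by positivity
      have h2 : (0:ℝ) ≤ (y:ℝ) * Real.exp ((y:ℝ)+1) := by positivity
      linarith
    have hstrict : expM2 T < expM2 (doubleStarOn n x) := by linarith
    exact ⟨hstrict.le, fun heq => absurd heq (ne_of_lt hstrict)⟩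
end
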